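/- arXiv:1604.05410 — 6 statements merged into one kernel-verified Lean document; each statement's English description precedes it below -/
import Mathlib

section
/- Let a : ℕ × ℕ → ℂ be a function of two positive-integer variables with Σ_{n₁,n₂=1}^∞ |a(n₁,n₂)| < ∞. Then lim_{x,y → ∞} (1/log(min(x,y))) · Σ_{n₁ ≤ x, n₂ ≤ y} a(n₁,n₂) · log(min(x/n₁, y/n₂)) = Σ_{n₁,n₂=1}^∞ a(n₁,n₂). -/
open Filter Finset Topology

theorem stmt_2 (a : ℕ → ℕ → ℂ)
    (ha : Summable fun q : ℕ+ × ℕ+ => ‖a q.1 q.2‖) :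
    Tendsto (fun p : ℝ × ℝ =>
      (1 / (Real.log (min p.1 p.2)) : ℂ) *
        ∑ n₁ ∈ Finset.Icc 1 ⌊p.1⌋₊, ∑ n₂ ∈ Finset.Icc 1 ⌊p.2⌋₊,
          a n₁ n₂ * (Real.log (min (p.1 / n₁) (p.2 / n₂)) : ℂ))
      (atTop ×ˢ atTop) (𝓝 (∑' q : ℕ+ × ℕ+, a q.1 q.2)) := by
  set l : Filter (ℝ × ℝ) := atTop ×ˢ atTop with hl
  set c : ℝ × ℝ → ℕ → ℕ → ℝ := fun p n₁ n₂ =>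
    Real.log (min (p.1 / n₁) (p.2 / n₂)) / Real.log (min p.1 p.2) with hc
  set F : ℝ × ℝ → ℕ+ × ℕ+ → ℂ := fun p q =>
    if (q.1 : ℕ) ≤ ⌊p.1⌋₊ ∧ (q.2 : ℕ) ≤ ⌊p.2⌋₊ then
      a q.1 q.2 * ((c p q.1 q.2 : ℝ) : ℂ) else 0 with hF
  have hfst : Tendsto (fun p : ℝ × ℝ => p.1) l atTop := tendsto_fst
  have hsnd : Tendsto (fun p : ℝ × ℝ => p.2) l atTop := tendsto_snd
  have hmin : Tendsto (fun p : ℝ × ℝ => min p.1 p.2) l atTop := by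
    rw [tendsto_atTop]
    intro b
    filter_upwards [hfst.eventually (eventually_ge_atTop b),
      hsnd.eventually (eventually_ge_atTop b)] with p h1 h2
    exact le_min h1 h2
  have hL : Tendsto (fun p : ℝ × ℝ => Real.log (min p.1 p.2)) l atTop :=
    Real.tendsto_log_atTop.comp hmin
  -- pointwise limits
  have hlim : ∀ q : ℕ+ × ℕ+, Tendsto (fun p => F p q) l (𝓝 (a q.1 q.2)) := by
    rintro ⟨n₁, n₂⟩
    have hev : ∀ᶠ p : ℝ × ℝ in l, 2 ≤ p.1 ∧ ((n₁ : ℕ) : ℝ) ≤ p.1 ∧ 2 ≤ p.2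
        ∧ ((n₂ : ℕ) : ℝ) ≤ p.2 := by
      filter_upwards [hfst.eventually (eventually_ge_atTop 2),
        hfst.eventually (eventually_ge_atTop ((n₁ : ℕ) : ℝ)),
        hsnd.eventually (eventually_ge_atTop 2),
        hsnd.eventually (eventually_ge_atTop ((n₂ : ℕ) : ℝ))] with p h1 h2 h3 h4
      exact ⟨h1, h2, h3, h4⟩
    have hn₁ : (0 : ℝ) < ((n₁ : ℕ) : ℝ) := by exact_mod_cast n₁.pos
    have hn₂ : (0 : ℝ) < ((n₂ : ℕ) : ℝ) := by exact_mod_cast n₂.pos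
    have hn₁' : (1 : ℝ) ≤ ((n₁ : ℕ) : ℝ) := by exact_mod_cast n₁.one_le
    have hn₂' : (1 : ℝ) ≤ ((n₂ : ℕ) : ℝ) := by exact_mod_cast n₂.one_le
    have hcl : Tendsto (fun p : ℝ × ℝ => c p n₁ n₂) l (𝓝 1) := by
      have key : Tendsto (fun p : ℝ × ℝ => c p n₁ n₂ - 1) l (𝓝 0) := by
        apply squeeze_zero_norm' (a := fun p : ℝ × ℝ =>
          Real.log (((n₁ : ℕ) : ℝ) * ((n₂ : ℕ) : ℝ)) / Real.log (min p.1 p.2))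
        · filter_upwards [hev] with p hp
          obtain ⟨h1, h2, h3, h4⟩ := hp
          have hm2 : (2 : ℝ) ≤ min p.1 p.2 := le_min h1 h3
          have hm0 : (0 : ℝ) < min p.1 p.2 := by linarith
          have hL0 : 0 < Real.log (min p.1 p.2) := Real.log_pos (by linarith)
          have hq0 : (0 : ℝ) < min (p.1 / ((n₁ : ℕ) : ℝ)) (p.2 / ((n₂ : ℕ) : ℝ)) :=
            lt_min (div_pos (by linarith) hn₁) (div_pos (by linarith) hn₂)
          have hML : Real.log (min (p.1 / ((n₁ : ℕ) : ℝ)) (p.2 / ((n₂ : ℕ) : ℝ))) ≤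
              Real.log (min p.1 p.2) := by
            apply Real.log_le_log hq0
            exact min_le_min (div_le_self (by linarith) hn₁')
              (div_le_self (by linarith) hn₂')
          have h12 : (0 : ℝ) < ((n₁ : ℕ) : ℝ) * ((n₂ : ℕ) : ℝ) := mul_pos hn₁ hn₂
          have hMK : Real.log (min p.1 p.2) - Real.log (((n₁ : ℕ) : ℝ) * ((n₂ : ℕ) : ℝ)) ≤
              Real.log (min (p.1 / ((n₁ : ℕ) : ℝ)) (p.2 / ((n₂ : ℕ) : ℝ))) := by
            have hdiv : min p.1 p.2 / (((n₁ : ℕ) : ℝ) * ((n₂ : ℕ) : ℝ)) ≤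
                min (p.1 / ((n₁ : ℕ) : ℝ)) (p.2 / ((n₂ : ℕ) : ℝ)) := by
              apply le_min
              · rw [div_le_div_iff₀ h12 hn₁]
                have t1 : (min p.1 p.2) * ((n₁ : ℕ) : ℝ) ≤ p.1 * ((n₁ : ℕ) : ℝ) :=
                  mul_le_mul_of_nonneg_right (min_le_left _ _) hn₁.le
                have t2 : p.1 * ((n₁ : ℕ) : ℝ) ≤ p.1 * (((n₁ : ℕ) : ℝ) * ((n₂ : ℕ) : ℝ)) :=
                  mul_le_mul_of_nonneg_left (le_mul_of_one_le_right hn₁.le hn₂') (by linarith)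
                linarith
              · rw [div_le_div_iff₀ h12 hn₂]
                have t1 : (min p.1 p.2) * ((n₂ : ℕ) : ℝ) ≤ p.2 * ((n₂ : ℕ) : ℝ) :=
                  mul_le_mul_of_nonneg_right (min_le_right _ _) hn₂.le
                have t2 : p.2 * ((n₂ : ℕ) : ℝ) ≤ p.2 * (((n₁ : ℕ) : ℝ) * ((n₂ : ℕ) : ℝ)) :=
                  mul_le_mul_of_nonneg_left (le_mul_of_one_le_left hn₂.le hn₁') (by linarith)
                linarith
            calc Real.log (min p.1 p.2) - Real.log (((n₁ : ℕ) : ℝ) * ((n₂ : ℕ) : ℝ))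
                = Real.log (min p.1 p.2 / (((n₁ : ℕ) : ℝ) * ((n₂ : ℕ) : ℝ))) :=
                  (Real.log_div hm0.ne' h12.ne').symm
              _ ≤ _ := Real.log_le_log (div_pos hm0 h12) hdiv
          have hb : |c p n₁ n₂ - 1| ≤
              Real.log (((n₁ : ℕ) : ℝ) * ((n₂ : ℕ) : ℝ)) / Real.log (min p.1 p.2) := by
            rw [hc]
            simp only
            rw [div_sub_one hL0.ne', abs_div, abs_of_pos hL0,
              abs_of_nonpos (by linarith)]
            rw [div_le_div_iff₀ hL0 hL0]
            nlinarith
          simpa using hb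
        · exact tendsto_const_nhds.div_atTop hL
      have h := key.add (tendsto_const_nhds (x := (1 : ℝ)))
      simpa using h
    have heq : ∀ᶠ p : ℝ × ℝ in l,
        a (n₁ : ℕ) (n₂ : ℕ) * ((c p n₁ n₂ : ℝ) : ℂ) = F p (n₁, n₂) := by
      filter_upwards [hev] with p hp
      obtain ⟨h1, h2, h3, h4⟩ := hp
      rw [hF]
      simp only
      rw [if_pos ⟨Nat.le_floor h2, Nat.le_floor h4⟩]
    have hm : Tendsto (fun p : ℝ × ℝ => a (n₁ : ℕ) (n₂ : ℕ) * ((c p n₁ n₂ : ℝ) : ℂ)) l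
        (𝓝 (a (n₁ : ℕ) (n₂ : ℕ) * ((1 : ℝ) : ℂ))) :=
      Tendsto.const_mul _ ((Complex.continuous_ofReal.tendsto _).comp hcl)
    have := hm.congr' heq
    simpa using this
  -- uniform bound
  have hbound : ∀ᶠ p : ℝ × ℝ in l, ∀ q : ℕ+ × ℕ+,
      ‖F p q‖ ≤ ‖a q.1 q.2‖ := by
    filter_upwards [hfst.eventually (eventually_ge_atTop (2 : ℝ)),
      hsnd.eventually (eventually_ge_atTop (2 : ℝ))] with p h1 h2
    intro q
    rw [hF]
    simp only
    split_ifs with h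
    · obtain ⟨hq1, hq2⟩ := h
      have hn₁ : (0 : ℝ) < ((q.1 : ℕ) : ℝ) := by exact_mod_cast q.1.pos
      have hn₂ : (0 : ℝ) < ((q.2 : ℕ) : ℝ) := by exact_mod_cast q.2.pos
      have hfl1 : ((⌊p.1⌋₊ : ℕ) : ℝ) ≤ p.1 := Nat.floor_le (by linarith)
      have hfl2 : ((⌊p.2⌋₊ : ℕ) : ℝ) ≤ p.2 := Nat.floor_le (by linarith)
      have hx1 : ((q.1 : ℕ) : ℝ) ≤ p.1 :=
        le_trans (by exact_mod_cast hq1) hfl1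
      have hx2 : ((q.2 : ℕ) : ℝ) ≤ p.2 :=
        le_trans (by exact_mod_cast hq2) hfl2
      have hm0 : (0 : ℝ) < min p.1 p.2 := lt_min (by linarith) (by linarith)
      have hL0 : 0 < Real.log (min p.1 p.2) :=
        Real.log_pos (lt_min (by linarith) (by linarith))
      have hM0 : 0 ≤ Real.log (min (p.1 / ((q.1 : ℕ) : ℝ)) (p.2 / ((q.2 : ℕ) : ℝ))) :=
        Real.log_nonneg (le_min ((one_le_div hn₁).2 hx1) ((one_le_div hn₂).2 hx2))
      have hML : Real.log (min (p.1 / ((q.1 : ℕ) : ℝ)) (p.2 / ((q.2 : ℕ) : ℝ))) ≤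
          Real.log (min p.1 p.2) := by
        apply Real.log_le_log
        · exact lt_min (div_pos (by linarith) hn₁) (div_pos (by linarith) hn₂)
        · exact min_le_min (div_le_self (by linarith) (by exact_mod_cast q.1.one_le))
            (div_le_self (by linarith) (by exact_mod_cast q.2.one_le))
      have hcb : |c p (q.1 : ℕ) (q.2 : ℕ)| ≤ 1 := by
        rw [hc]
        simp only
        rw [abs_div, abs_of_nonneg hM0, abs_of_pos hL0, div_le_one hL0]
        exact hML
      calc ‖a (q.1 : ℕ) (q.2 : ℕ) * ((c p (q.1 : ℕ) (q.2 : ℕ) : ℝ) : ℂ)‖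
          = ‖a (q.1 : ℕ) (q.2 : ℕ)‖ * |c p (q.1 : ℕ) (q.2 : ℕ)| := by
            rw [norm_mul, Complex.norm_real, Real.norm_eq_abs]
        _ ≤ ‖a (q.1 : ℕ) (q.2 : ℕ)‖ * 1 :=
            mul_le_mul_of_nonneg_left hcb (norm_nonneg _)
        _ = ‖a (q.1 : ℕ) (q.2 : ℕ)‖ := mul_one _
    · simp
  have key := tendsto_tsum_of_dominated_convergence ha hlim hbound
  -- identify the two expressions
  have main_eq : ∀ p : ℝ × ℝ,
      (∑' q : ℕ+ × ℕ+, F p q) =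
      (1 / (Real.log (min p.1 p.2)) : ℂ) *
        ∑ n₁ ∈ Finset.Icc 1 ⌊p.1⌋₊, ∑ n₂ ∈ Finset.Icc 1 ⌊p.2⌋₊,
          a n₁ n₂ * (Real.log (min (p.1 / n₁) (p.2 / n₂)) : ℂ) := by
    intro p
    set N₁ := ⌊p.1⌋₊ with hN₁
    set N₂ := ⌊p.2⌋₊ with hN₂
    set G : ℕ × ℕ → ℂ := fun m =>
      if 1 ≤ m.1 ∧ m.1 ≤ N₁ ∧ 1 ≤ m.2 ∧ m.2 ≤ N₂ then
        a m.1 m.2 * ((c p m.1 m.2 : ℝ) : ℂ) else 0 with hG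
    have h1 : ∑' q : ℕ+ × ℕ+, F p q = ∑' q : ℕ+ × ℕ+, G ((q.1 : ℕ), (q.2 : ℕ)) := by
      apply tsum_congr
      intro q
      rw [hF, hG]
      simp only
      by_cases h : (q.1 : ℕ) ≤ N₁ ∧ (q.2 : ℕ) ≤ N₂
      · rw [if_pos h, if_pos ⟨q.1.one_le, h.1, q.2.one_le, h.2⟩]
      · rw [if_neg h, if_neg (by tauto)]
    have hι : Function.Injective (fun q : ℕ+ × ℕ+ => (((q.1 : ℕ), (q.2 : ℕ)) : ℕ × ℕ)) := by
      intro q r h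
      simp only [Prod.mk.injEq] at h
      exact Prod.ext (PNat.coe_injective h.1) (PNat.coe_injective h.2)
    have h2 : ∑' q : ℕ+ × ℕ+, G ((q.1 : ℕ), (q.2 : ℕ)) = ∑' m : ℕ × ℕ, G m := by
      apply hι.tsum_eq
      intro m hm
      rw [Function.mem_support] at hm
      have hm1 : 1 ≤ m.1 ∧ m.1 ≤ N₁ ∧ 1 ≤ m.2 ∧ m.2 ≤ N₂ := by
        by_contra hcon
        exact hm (by rw [hG]; simp only; rw [if_neg hcon])
      exact ⟨(⟨m.1, hm1.1⟩, ⟨m.2, hm1.2.2.1⟩), rfl⟩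
    have h3 : ∑' m : ℕ × ℕ, G m = ∑ m ∈ Finset.Icc 1 N₁ ×ˢ Finset.Icc 1 N₂, G m := by
      apply tsum_eq_sum
      intro m hm
      rw [Finset.mem_product, Finset.mem_Icc, Finset.mem_Icc] at hm
      rw [hG]
      simp only
      rw [if_neg (by omega)]
    have h4 : ∑ m ∈ Finset.Icc 1 N₁ ×ˢ Finset.Icc 1 N₂, G m
        = ∑ n₁ ∈ Finset.Icc 1 N₁, ∑ n₂ ∈ Finset.Icc 1 N₂,
            a n₁ n₂ * ((c p n₁ n₂ : ℝ) : ℂ) := by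
      rw [Finset.sum_product]
      refine Finset.sum_congr rfl fun n₁ hn₁ => Finset.sum_congr rfl fun n₂ hn₂ => ?_
      rw [Finset.mem_Icc] at hn₁ hn₂
      rw [hG]
      simp only
      rw [if_pos ⟨hn₁.1, hn₁.2, hn₂.1, hn₂.2⟩]
    rw [h1, h2, h3, h4, Finset.mul_sum]
    refine Finset.sum_congr rfl fun n₁ _ => ?_
    rw [Finset.mul_sum]
    refine Finset.sum_congr rfl fun n₂ _ => ?_
    rw [hc]
    simp only
    push_cast
    ring
  exact Tendsto.congr main_eq key
end

section
/- For fixed reals α, β ≥ 0, Σ_{n₁, n₂ ≤ x} (log n₁)^α (log n₂)^β log(min(x/n₁, x/n₂)) / (n₁ n₂) = (log x)^{α+β+3} / ((α+1)(β+1)(α+β+3)) + o((log x)^{α+β+3}) as x → ∞. -/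
open Filter Finset Asymptotics Real MeasureTheory

lemma antitoneOn_log_rpow_div (γ : ℝ) (hγ : 0 ≤ γ) :
    AntitoneOn (fun t : ℝ => Real.log t ^ γ / t) (Set.Ici (Real.exp γ)) := by
  intro s hs t ht hst
  simp only [Set.mem_Ici] at hs ht
  have hs0 : 0 < s := lt_of_lt_of_le (Real.exp_pos γ) hs
  have ht0 : 0 < t := lt_of_lt_of_le (Real.exp_pos γ) ht
  have hls : γ ≤ Real.log s := (Real.le_log_iff_exp_le hs0).2 hs
  have hlt : γ ≤ Real.log t := (Real.le_log_iff_exp_le ht0).2 ht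
  have hlst : Real.log s ≤ Real.log t := Real.log_le_log_iff hs0 ht0 |>.2 hst
  rcases eq_or_lt_of_le hγ with h0 | hγpos
  · simp only [← h0, Real.rpow_zero]
    gcongr
  have hlspos : 0 < Real.log s := lt_of_lt_of_le hγpos hls
  -- key : (log t)^γ ≤ (log s)^γ * (t/s)
  have key : Real.log t ^ γ ≤ Real.log s ^ γ * (t / s) := by
    have h1 : Real.log t ≤ Real.log s * Real.exp ((Real.log t - Real.log s) / γ) := by
      have h2 : (Real.log t - Real.log s) / γ + 1 ≤ Real.exp ((Real.log t - Real.log s) / γ) :=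
        Real.add_one_le_exp _
      have h3 : Real.log s * ((Real.log t - Real.log s) / γ + 1)
          ≤ Real.log s * Real.exp ((Real.log t - Real.log s) / γ) := by
        gcongr
      refine le_trans ?_ h3
      rw [mul_add, mul_one]
      have h4 : Real.log t - Real.log s ≤ Real.log s * ((Real.log t - Real.log s) / γ) := by
        rw [mul_div_assoc']
        rw [le_div_iff₀ hγpos]
        have : Real.log t - Real.log s ≥ 0 := by linarith
        calc (Real.log t - Real.log s) * γ ≤ (Real.log t - Real.log s) * Real.log s := by gcongr
          _ = Real.log s * (Real.log t - Real.log s) := by ring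
      linarith
    calc Real.log t ^ γ ≤ (Real.log s * Real.exp ((Real.log t - Real.log s) / γ)) ^ γ := by
          apply Real.rpow_le_rpow (by linarith) h1 hγ
      _ = Real.log s ^ γ * (Real.exp ((Real.log t - Real.log s) / γ)) ^ γ :=
          Real.mul_rpow hlspos.le (Real.exp_pos _).le
      _ = Real.log s ^ γ * (t / s) := by
          rw [← Real.exp_mul, div_mul_cancel₀ _ (ne_of_gt hγpos), Real.exp_sub,
            Real.exp_log ht0, Real.exp_log hs0]
  rw [div_le_div_iff₀ ht0 hs0]
  calc Real.log t ^ γ * s ≤ Real.log s ^ γ * (t / s) * s := by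
        gcongr
    _ = Real.log s ^ γ * t := by field_simp

lemma continuousOn_h (γ : ℝ) (hγ : 0 ≤ γ) {s : Set ℝ} (hs : ∀ t ∈ s, (0:ℝ) < t) :
    ContinuousOn (fun t : ℝ => Real.log t ^ γ / t) s := by
  apply ContinuousOn.div
  · apply ContinuousOn.rpow_const
    · exact Real.continuousOn_log.mono (fun t ht => ne_of_gt (hs t ht))
    · intro t ht; exact Or.inr hγ
  · exact continuousOn_id
  · exact fun t ht => ne_of_gt (hs t ht)

lemma integral_h (γ : ℝ) (hγ : 0 ≤ γ) {a b : ℝ} (ha : 1 ≤ a) (hab : a ≤ b) :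
    ∫ t in a..b, Real.log t ^ γ / t
      = Real.log b ^ (γ + 1) / (γ + 1) - Real.log a ^ (γ + 1) / (γ + 1) := by
  have hγ1 : (γ : ℝ) + 1 ≠ 0 := by linarith
  apply intervalIntegral.integral_eq_sub_of_hasDerivAt
  · intro t ht
    rw [Set.uIcc_of_le hab] at ht
    have ht0 : (0:ℝ) < t := lt_of_lt_of_le one_pos (le_trans ha ht.1)
    have hd1 : HasDerivAt Real.log (1 / t) t := by
      simpa using Real.hasDerivAt_log (ne_of_gt ht0)
    have hd2 : HasDerivAt (fun u : ℝ => u ^ (γ + 1)) ((γ + 1) * Real.log t ^ γ) (Real.log t) := by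
      have := Real.hasDerivAt_rpow_const (x := Real.log t) (p := γ + 1) (Or.inr (by linarith))
      simpa using this
    have := (hd2.comp t hd1).div_const (γ + 1)
    refine this.congr_deriv ?_
    field_simp
  · apply (continuousOn_h γ hγ ?_).intervalIntegrable
    intro t ht
    rw [Set.uIcc_of_le hab] at ht
    exact lt_of_lt_of_le one_pos (le_trans ha ht.1)

noncomputable def Ff (γ : ℝ) (y : ℝ) : ℝ := ∑ n ∈ Finset.Icc 1 ⌊y⌋₊, Real.log n ^ γ / n

lemma Ff_nonneg (γ y : ℝ) : 0 ≤ Ff γ y := by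
  apply Finset.sum_nonneg
  intro n hn
  simp only [Finset.mem_Icc] at hn
  have h1 : (1:ℝ) ≤ n := by exact_mod_cast hn.1
  positivity

lemma Ff_mono (γ : ℝ) {y z : ℝ} (hyz : y ≤ z) : Ff γ y ≤ Ff γ z := by
  apply Finset.sum_le_sum_of_subset_of_nonneg
  · exact Finset.Icc_subset_Icc le_rfl (Nat.floor_mono hyz)
  · intro n hn _
    simp only [Finset.mem_Icc] at hn
    have h1 : (1:ℝ) ≤ n := by exact_mod_cast hn.1
    positivity

lemma sum_approx (γ : ℝ) (hγ : 0 ≤ γ) :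
    ∃ C : ℝ, 0 ≤ C ∧ ∀ y : ℝ, ((⌈Real.exp γ⌉₊ + 1 : ℕ) : ℝ) ≤ y →
      |Ff γ y - Real.log y ^ (γ + 1) / (γ + 1)| ≤ C := by
  set n₀ : ℕ := ⌈Real.exp γ⌉₊ with hn₀def
  set h : ℝ → ℝ := fun t => Real.log t ^ γ / t with hdef
  set H : ℝ → ℝ := fun u => Real.log u ^ (γ + 1) / (γ + 1) with hHdef
  have hn₀1 : 1 ≤ n₀ := Nat.one_le_ceil_iff.2 (Real.exp_pos γ)
  have hn₀e : Real.exp γ ≤ (n₀ : ℝ) := Nat.le_ceil _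
  have hn₀r : (1:ℝ) ≤ (n₀ : ℝ) := by exact_mod_cast hn₀1
  have hh : ∀ n : ℕ, 1 ≤ n → 0 ≤ h n := by
    intro n hn
    have : (1:ℝ) ≤ n := by exact_mod_cast hn
    have h2 : 0 ≤ Real.log (n:ℝ) := Real.log_nonneg this
    simp only [hdef]
    positivity
  have hanti : AntitoneOn h (Set.Ici (Real.exp γ)) := antitoneOn_log_rpow_div γ hγ
  have hhn₀ : 0 ≤ h n₀ := hh n₀ hn₀1
  have hA0 : 0 ≤ ∑ n ∈ Finset.Icc 1 n₀, h n := by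
    apply Finset.sum_nonneg
    intro n hn
    exact hh n (Finset.mem_Icc.1 hn).1
  refine ⟨(∑ n ∈ Finset.Icc 1 n₀, h n) + |H n₀| + 2 * h n₀, by positivity, ?_⟩
  intro y hy
  set N : ℕ := ⌊y⌋₊ with hNdef
  have hN : n₀ + 1 ≤ N := Nat.le_floor hy
  have hNr : (n₀:ℝ) ≤ (N:ℝ) := by exact_mod_cast Nat.le_of_succ_le hN
  have hN1 : (1:ℝ) ≤ (N:ℝ) := le_trans hn₀r hNr
  have hy0 : (0:ℝ) ≤ y := by
    have : ((n₀ + 1 : ℕ) : ℝ) ≥ 0 := by positivity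
    linarith
  have hNy : (N:ℝ) ≤ y := Nat.floor_le hy0
  have hyN1 : y < (N:ℝ) + 1 := by exact_mod_cast Nat.lt_floor_add_one y
  have hanti' : AntitoneOn h (Set.Icc (n₀:ℝ) (N:ℝ)) :=
    hanti.mono (fun t ht => le_trans hn₀e ht.1)
  have hI : ∫ t in (n₀:ℝ)..(N:ℝ), h t = H (N:ℝ) - H (n₀:ℝ) := integral_h γ hγ hn₀r hNr
  set B : ℝ := ∑ n ∈ Finset.Icc (n₀+1) N, h n with hBdef
  -- lower bound : B ≤ ∫
  have hlow : B ≤ ∫ t in (n₀:ℝ)..(N:ℝ), h t := by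
    have hs := AntitoneOn.sum_le_integral_Ico (Nat.le_of_succ_le hN) hanti'
    refine le_trans (le_of_eq ?_) hs
    rw [hBdef, ← Finset.Ico_add_one_right_eq_Icc]
    rw [show (∑ i ∈ Finset.Ico n₀ N, h ((i:ℕ) + 1 : ℕ)) =
        ∑ i ∈ Finset.Ico (n₀ + 1) (N + 1), h (i : ℕ) from
      Finset.sum_Ico_add' (fun i : ℕ => h (i:ℝ)) n₀ N 1]
  -- upper bound : ∫ ≤ B + h n₀
  have hup : (∫ t in (n₀:ℝ)..(N:ℝ), h t) ≤ B + h n₀ := by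
    have hs := AntitoneOn.integral_le_sum_Ico (Nat.le_of_succ_le hN) hanti'
    refine le_trans hs ?_
    rw [Finset.sum_eq_sum_Ico_succ_bot (Nat.lt_of_succ_le hN) (fun i : ℕ => h (i:ℝ))]
    rw [add_comm]
    gcongr
    apply Finset.sum_le_sum_of_subset_of_nonneg
    · rw [← Finset.Ico_add_one_right_eq_Icc]
      exact Finset.Ico_subset_Ico le_rfl (Nat.le_succ N)
    · intro n hn _
      exact hh n (le_trans (Nat.le_add_left 1 n₀) (Finset.mem_Icc.1 hn).1)
  -- tail : |H y - H N| ≤ h n₀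
  have htail : |H y - H (N:ℝ)| ≤ h n₀ := by
    have h1y : (1:ℝ) ≤ y := le_trans hN1 hNy
    have hIy : ∫ t in (N:ℝ)..y, h t = H y - H (N:ℝ) := integral_h γ hγ hN1 hNy
    rw [← hIy]
    have hb := intervalIntegral.norm_integral_le_of_norm_le_const (C := h n₀)
      (f := h) (a := (N:ℝ)) (b := y) ?_
    · rw [Real.norm_eq_abs] at hb
      refine le_trans hb ?_
      have : |y - (N:ℝ)| ≤ 1 := by rw [abs_of_nonneg (by linarith)]; linarith
      nlinarith [abs_nonneg (y - (N:ℝ))]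
    · intro t ht
      rw [Set.uIoc_of_le hNy] at ht
      rw [Real.norm_eq_abs, abs_of_nonneg]
      · exact hanti (Set.mem_Ici.2 hn₀e) (Set.mem_Ici.2 (le_trans hn₀e (le_trans hNr ht.1.le)))
          (le_trans hNr ht.1.le)
      · apply div_nonneg _ (by linarith [ht.1, hNr, hn₀r])
        apply Real.rpow_nonneg
        apply Real.log_nonneg (by linarith [ht.1])
  -- decompose the sum
  have hsplit : Ff γ y = (∑ n ∈ Finset.Icc 1 n₀, h n) + B := by
    have e1 : Finset.Icc 1 N = Finset.Ioc 0 N := Finset.Icc_add_one_left_eq_Ioc 0 N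
    have e2 : Finset.Icc 1 n₀ = Finset.Ioc 0 n₀ := Finset.Icc_add_one_left_eq_Ioc 0 n₀
    have e3 : Finset.Icc (n₀+1) N = Finset.Ioc n₀ N := Finset.Icc_add_one_left_eq_Ioc n₀ N
    rw [Ff, hBdef, ← hNdef, e1, e2, e3]
    exact (Finset.sum_Ioc_consecutive _ (Nat.zero_le n₀) (Nat.le_of_succ_le hN)).symm
  -- combine
  have hcomb : Ff γ y - H y = (∑ n ∈ Finset.Icc 1 n₀, h n)
      + (B - (H (N:ℝ) - H (n₀:ℝ))) + (H (N:ℝ) - H y) - H (n₀:ℝ) := by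
    rw [hsplit]; ring
  rw [show Real.log y ^ (γ + 1) / (γ + 1) = H y from rfl, hcomb]
  have h1 : |B - (H (N:ℝ) - H (n₀:ℝ))| ≤ h n₀ := by
    rw [← hI, abs_le]
    constructor <;> linarith
  have h2 : |H (N:ℝ) - H y| ≤ h n₀ := by rw [abs_sub_comm]; exact htail
  obtain ⟨h1l, h1r⟩ := abs_le.1 h1
  obtain ⟨h2l, h2r⟩ := abs_le.1 h2
  have hd1 := le_abs_self (H (n₀:ℝ))
  have hd2 := neg_abs_le (H (n₀:ℝ))
  rw [abs_le]
  constructor <;> linarith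

lemma integral_ite (c m L : ℝ) (hm : 0 ≤ m) (hmL : m ≤ L) :
    ∫ t in Set.Ioc (0:ℝ) L, (if t ≤ m then c else 0) = c * m := by
  have hfun : (fun t : ℝ => if t ≤ m then c else 0)
      = Set.indicator (Set.Iic m) (fun _ => c) := by
    funext t
    simp [Set.indicator_apply, Set.mem_Iic]
  rw [hfun, MeasureTheory.integral_indicator measurableSet_Iic]
  rw [MeasureTheory.setIntegral_const, measureReal_def, Measure.restrict_apply measurableSet_Iic]
  have hset : Set.Iic m ∩ Set.Ioc 0 L = Set.Ioc 0 m := by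
    ext t
    simp only [Set.mem_inter_iff, Set.mem_Iic, Set.mem_Ioc]
    constructor
    · rintro ⟨h1, h2, h3⟩; exact ⟨h2, h1⟩
    · rintro ⟨h1, h2⟩; exact ⟨h2, h1, le_trans h2 hmL⟩
  rw [hset, Real.volume_Ioc, sub_zero, ENNReal.toReal_ofReal hm, smul_eq_mul, mul_comm]

lemma integrable_ite (c m L : ℝ) :
    MeasureTheory.Integrable (fun t : ℝ => if t ≤ m then c else 0)
      (volume.restrict (Set.Ioc (0:ℝ) L)) := by
  haveI : IsFiniteMeasure (volume.restrict (Set.Ioc (0:ℝ) L)) :=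
    ⟨by rw [Measure.restrict_apply_univ]; exact measure_Ioc_lt_top⟩
  have hfun : (fun t : ℝ => if t ≤ m then c else 0)
      = Set.indicator (Set.Iic m) (fun _ => c) := by
    funext t
    simp [Set.indicator_apply, Set.mem_Iic]
  rw [hfun]
  exact (MeasureTheory.integrable_const c).indicator measurableSet_Iic

lemma exchange (α β x : ℝ) (hx : 1 ≤ x) :
    (∑ n₁ ∈ Finset.Icc 1 ⌊x⌋₊, ∑ n₂ ∈ Finset.Icc 1 ⌊x⌋₊,
      Real.log n₁ ^ α * Real.log n₂ ^ β * Real.log (min (x / n₁) (x / n₂)) / (n₁ * n₂))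
    = ∫ t in Set.Ioc 0 (Real.log x),
        Ff α (x * Real.exp (-t)) * Ff β (x * Real.exp (-t)) := by
  classical
  have hx0 : (0:ℝ) < x := lt_of_lt_of_le one_pos hx
  set L := Real.log x with hL
  set N := ⌊x⌋₊ with hN
  -- basic facts about members
  have hmem : ∀ n ∈ Finset.Icc 1 N, (1:ℝ) ≤ (n:ℝ) ∧ (n:ℝ) ≤ x := by
    intro n hn
    rw [Finset.mem_Icc] at hn
    constructor
    · exact_mod_cast hn.1
    · exact le_trans (by exact_mod_cast hn.2) (Nat.floor_le hx0.le)
  -- condition equivalence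
  have hcond : ∀ t : ℝ, ∀ n ∈ Finset.Icc 1 N,
      ((n:ℝ) ≤ x * Real.exp (-t) ↔ t ≤ Real.log (x / n)) := by
    intro t n hn
    obtain ⟨hn1, hnx⟩ := hmem n hn
    have hn0 : (0:ℝ) < n := lt_of_lt_of_le one_pos hn1
    rw [← Real.log_le_log_iff hn0 (by positivity), Real.log_mul (ne_of_gt hx0)
      (ne_of_gt (Real.exp_pos _)), Real.log_exp, Real.log_div (ne_of_gt hx0) (ne_of_gt hn0)]
    constructor <;> intro <;> linarith
  -- Ff as a sum with indicator
  have hFf : ∀ γ : ℝ, ∀ t ∈ Set.Ioc (0:ℝ) L, Ff γ (x * Real.exp (-t))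
      = ∑ n ∈ Finset.Icc 1 N, (if (n:ℝ) ≤ x * Real.exp (-t) then Real.log n ^ γ / n else 0) := by
    intro γ t ht
    set y := x * Real.exp (-t) with hy
    have hy0 : 0 ≤ y := by positivity
    rw [Ff, ← Finset.sum_filter]
    congr 1
    ext n
    constructor
    · intro hny
      rw [Finset.mem_Icc] at hny
      have h3 : (n:ℝ) ≤ y := le_trans (Nat.cast_le.2 hny.2) (Nat.floor_le hy0)
      rw [Finset.mem_filter, Finset.mem_Icc]
      refine ⟨⟨hny.1, ?_⟩, h3⟩
      have hyx : y ≤ x := by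
        rw [hy]
        nlinarith [Real.exp_le_one_iff.2 (neg_nonpos.2 ht.1.le), Real.exp_pos (-t)]
      exact Nat.le_floor (le_trans h3 hyx)
    · intro hmemf
      rw [Finset.mem_filter, Finset.mem_Icc] at hmemf
      rw [Finset.mem_Icc]
      exact ⟨hmemf.1.1, Nat.le_floor hmemf.2⟩
  -- rewrite the integrand on the set
  rw [MeasureTheory.setIntegral_congr_fun measurableSet_Ioc
    (g := fun t => ∑ n₁ ∈ Finset.Icc 1 N, ∑ n₂ ∈ Finset.Icc 1 N,
      (if t ≤ Real.log (x / n₁) ∧ t ≤ Real.log (x / n₂)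
        then (Real.log n₁ ^ α / n₁) * (Real.log n₂ ^ β / n₂) else 0))
    ?_]
  swap
  · intro t ht
    simp only
    rw [hFf α t ht, hFf β t ht, Finset.sum_mul_sum]
    apply Finset.sum_congr rfl
    intro n₁ hn₁
    apply Finset.sum_congr rfl
    intro n₂ hn₂
    rw [ite_zero_mul_ite_zero]
    simp only [hcond t n₁ hn₁, hcond t n₂ hn₂]
  -- swap integral and sums
  rw [MeasureTheory.integral_finset_sum _ (fun n₁ _ => MeasureTheory.integrable_finset_sum _
    (fun n₂ _ => by
      have : (fun t : ℝ => if t ≤ Real.log (x / n₁) ∧ t ≤ Real.log (x / n₂)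
          then (Real.log n₁ ^ α / n₁) * (Real.log n₂ ^ β / n₂) else 0)
          = fun t : ℝ => if t ≤ min (Real.log (x / n₁)) (Real.log (x / n₂))
          then (Real.log n₁ ^ α / n₁) * (Real.log n₂ ^ β / n₂) else 0 := by
        funext t; simp [le_min_iff]
      rw [this]
      exact integrable_ite _ _ _))]
  apply Finset.sum_congr rfl
  intro n₁ hn₁
  rw [MeasureTheory.integral_finset_sum _ (fun n₂ _ => by
      have : (fun t : ℝ => if t ≤ Real.log (x / n₁) ∧ t ≤ Real.log (x / n₂)
          then (Real.log n₁ ^ α / n₁) * (Real.log n₂ ^ β / n₂) else 0)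
          = fun t : ℝ => if t ≤ min (Real.log (x / n₁)) (Real.log (x / n₂))
          then (Real.log n₁ ^ α / n₁) * (Real.log n₂ ^ β / n₂) else 0 := by
        funext t; simp [le_min_iff]
      rw [this]
      exact integrable_ite _ _ _)]
  apply Finset.sum_congr rfl
  intro n₂ hn₂
  obtain ⟨h11, h1x⟩ := hmem n₁ hn₁
  obtain ⟨h21, h2x⟩ := hmem n₂ hn₂
  have h10 : (0:ℝ) < n₁ := lt_of_lt_of_le one_pos h11
  have h20 : (0:ℝ) < n₂ := lt_of_lt_of_le one_pos h21
  have hd1 : (1:ℝ) ≤ x / n₁ := (one_le_div h10).2 h1x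
  have hd2 : (1:ℝ) ≤ x / n₂ := (one_le_div h20).2 h2x
  have hm0 : 0 ≤ min (Real.log (x / n₁)) (Real.log (x / n₂)) :=
    le_min (Real.log_nonneg hd1) (Real.log_nonneg hd2)
  have hmL : min (Real.log (x / n₁)) (Real.log (x / n₂)) ≤ L := by
    apply min_le_of_left_le
    rw [Real.log_div (ne_of_gt hx0) (ne_of_gt h10)]
    have := Real.log_nonneg h11
    rw [hL]; linarith
  have hlogmin : Real.log (min (x / n₁) (x / n₂))
      = min (Real.log (x / n₁)) (Real.log (x / n₂)) := by
    rcases le_total (x / n₁) (x / n₂) with hc | hc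
    · rw [min_eq_left hc, min_eq_left ((Real.log_le_log_iff (by positivity) (by positivity)).2 hc)]
    · rw [min_eq_right hc, min_eq_right ((Real.log_le_log_iff (by positivity) (by positivity)).2 hc)]
  have hrw : (fun t : ℝ => if t ≤ Real.log (x / n₁) ∧ t ≤ Real.log (x / n₂)
      then (Real.log n₁ ^ α / n₁) * (Real.log n₂ ^ β / n₂) else 0)
      = fun t : ℝ => if t ≤ min (Real.log (x / n₁)) (Real.log (x / n₂))
      then (Real.log n₁ ^ α / n₁) * (Real.log n₂ ^ β / n₂) else 0 := by
    funext t; simp [le_min_iff]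
  rw [hrw, integral_ite _ _ _ hm0 hmL, hlogmin]
  field_simp

lemma integral_main (δ L : ℝ) (hδ : 0 ≤ δ) (hL : 0 ≤ L) :
    ∫ t in Set.Ioc (0:ℝ) L, (L - t) ^ δ = L ^ (δ + 1) / (δ + 1) := by
  rw [← intervalIntegral.integral_of_le hL,
    intervalIntegral.integral_comp_sub_left (fun u : ℝ => u ^ δ) L, sub_self, sub_zero,
    integral_rpow (Or.inl (by linarith)), Real.zero_rpow (by linarith), sub_zero]

lemma prod_approx (α β : ℝ) (hα : 0 ≤ α) (hβ : 0 ≤ β) :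
    ∃ K : ℝ, 0 ≤ K ∧ ∀ x y : ℝ, 1 ≤ y → y ≤ x →
      |Ff α y * Ff β y - Real.log y ^ (α + β + 2) / ((α + 1) * (β + 1))|
        ≤ K * (1 + Real.log x ^ (α + 1) + Real.log x ^ (β + 1)) := by
  obtain ⟨Cα, hCα0, hCα⟩ := sum_approx α hα
  obtain ⟨Cβ, hCβ0, hCβ⟩ := sum_approx β hβ
  set y₀α : ℝ := ((⌈Real.exp α⌉₊ + 1 : ℕ) : ℝ) with hy₀α
  set y₀β : ℝ := ((⌈Real.exp β⌉₊ + 1 : ℕ) : ℝ) with hy₀β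
  set y₀ : ℝ := max y₀α y₀β with hy₀
  have h2α : (2:ℝ) ≤ y₀α := by
    rw [hy₀α]
    have : 1 ≤ ⌈Real.exp α⌉₊ := Nat.one_le_ceil_iff.2 (Real.exp_pos α)
    exact_mod_cast Nat.succ_le_succ this
  have h2 : (2:ℝ) ≤ y₀ := le_trans h2α (le_max_left _ _)
  have hD1 : 0 ≤ Ff α y₀ * Ff β y₀ := mul_nonneg (Ff_nonneg _ _) (Ff_nonneg _ _)
  have hab1 : (0:ℝ) < (α + 1) * (β + 1) := by nlinarith
  have hD2 : 0 ≤ Real.log y₀ ^ (α + β + 2) / ((α + 1) * (β + 1)) := by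
    apply div_nonneg _ hab1.le
    exact Real.rpow_nonneg (Real.log_nonneg (by linarith)) _
  set D : ℝ := Ff α y₀ * Ff β y₀ + Real.log y₀ ^ (α + β + 2) / ((α + 1) * (β + 1)) with hD
  have hK0' : (0:ℝ) ≤ (Cα + 1) * (Cβ + 1) := by positivity
  have hD0' : (0:ℝ) ≤ D := add_nonneg hD1 hD2
  refine ⟨(Cα + 1) * (Cβ + 1) + D, by linarith, ?_⟩
  intro x y hy1 hyx
  have hx1 : (1:ℝ) ≤ x := le_trans hy1 hyx
  have hlx0 : 0 ≤ Real.log x := Real.log_nonneg hx1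
  have hly0 : 0 ≤ Real.log y := Real.log_nonneg hy1
  have hlyx : Real.log y ≤ Real.log x := Real.log_le_log (by linarith) hyx
  have hlxα : 0 ≤ Real.log x ^ (α + 1) := Real.rpow_nonneg hlx0 _
  have hlxβ : 0 ≤ Real.log x ^ (β + 1) := Real.rpow_nonneg hlx0 _
  rcases le_or_gt y₀ y with hcase | hcase
  · -- y large : both approximations apply
    have heα := hCα y (le_trans (le_max_left _ _) hcase)
    have heβ := hCβ y (le_trans (le_max_right _ _) hcase)
    have hly_pos : 0 < Real.log y := Real.log_pos (by linarith)
    set Hα : ℝ := Real.log y ^ (α + 1) / (α + 1) with hHα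
    set Hβ : ℝ := Real.log y ^ (β + 1) / (β + 1) with hHβ
    have hprod : Hα * Hβ = Real.log y ^ (α + β + 2) / ((α + 1) * (β + 1)) := by
      rw [hHα, hHβ, div_mul_div_comm, ← Real.rpow_add hly_pos,
        show α + 1 + (β + 1) = α + β + 2 from by ring]
    have hkey : Ff α y * Ff β y - Real.log y ^ (α + β + 2) / ((α + 1) * (β + 1))
        = Hα * (Ff β y - Hβ) + (Ff α y - Hα) * Hβ + (Ff α y - Hα) * (Ff β y - Hβ) := by
      rw [← hprod]; ring
    have hHαb : |Hα| ≤ Real.log x ^ (α + 1) := by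
      rw [hHα, abs_of_nonneg (by positivity)]
      have h1 : Real.log y ^ (α + 1) ≤ Real.log x ^ (α + 1) :=
        Real.rpow_le_rpow hly0 hlyx (by linarith)
      have h2 : Real.log y ^ (α + 1) / (α + 1) ≤ Real.log y ^ (α + 1) :=
        div_le_self (Real.rpow_nonneg hly0 _) (by linarith)
      linarith
    have hHβb : |Hβ| ≤ Real.log x ^ (β + 1) := by
      rw [hHβ, abs_of_nonneg (by positivity)]
      have h1 : Real.log y ^ (β + 1) ≤ Real.log x ^ (β + 1) :=
        Real.rpow_le_rpow hly0 hlyx (by linarith)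
      have h2 : Real.log y ^ (β + 1) / (β + 1) ≤ Real.log y ^ (β + 1) :=
        div_le_self (Real.rpow_nonneg hly0 _) (by linarith)
      linarith
    rw [hkey]
    have habs : |Hα * (Ff β y - Hβ) + (Ff α y - Hα) * Hβ + (Ff α y - Hα) * (Ff β y - Hβ)|
        ≤ |Hα| * Cβ + Cα * |Hβ| + Cα * Cβ := by
      calc |Hα * (Ff β y - Hβ) + (Ff α y - Hα) * Hβ + (Ff α y - Hα) * (Ff β y - Hβ)|
          ≤ |Hα * (Ff β y - Hβ)| + |(Ff α y - Hα) * Hβ| + |(Ff α y - Hα) * (Ff β y - Hβ)| :=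
            abs_add_three _ _ _
        _ ≤ |Hα| * Cβ + Cα * |Hβ| + Cα * Cβ := by
            rw [abs_mul, abs_mul, abs_mul]
            have b1 : |Hα| * |Ff β y - Hβ| ≤ |Hα| * Cβ :=
              mul_le_mul_of_nonneg_left heβ (abs_nonneg _)
            have b2 : |Ff α y - Hα| * |Hβ| ≤ Cα * |Hβ| :=
              mul_le_mul_of_nonneg_right heα (abs_nonneg _)
            have b3 : |Ff α y - Hα| * |Ff β y - Hβ| ≤ Cα * Cβ :=
              mul_le_mul heα heβ (abs_nonneg _) hCα0
            linarith
    refine le_trans habs ?_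
    have hbnd1 : |Hα| * Cβ ≤ Real.log x ^ (α + 1) * Cβ :=
      mul_le_mul_of_nonneg_right hHαb hCβ0
    have hbnd2 : Cα * |Hβ| ≤ Cα * Real.log x ^ (β + 1) :=
      mul_le_mul_of_nonneg_left hHβb hCα0
    have hD0 : (0:ℝ) ≤ D := add_nonneg hD1 hD2
    have expand : ((Cα + 1) * (Cβ + 1) + D) * (1 + Real.log x ^ (α + 1) + Real.log x ^ (β + 1))
        = Cα * Cβ + Cβ * Real.log x ^ (α + 1) + Cα * Real.log x ^ (β + 1)
          + (Cα * Cβ * Real.log x ^ (α + 1) + Cα * Cβ * Real.log x ^ (β + 1) + Cα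
            + Cα * Real.log x ^ (α + 1) + Cβ + Cβ * Real.log x ^ (β + 1) + 1
            + Real.log x ^ (α + 1) + Real.log x ^ (β + 1)
            + D * (1 + Real.log x ^ (α + 1) + Real.log x ^ (β + 1))) := by ring
    have g1 : 0 ≤ Cα * Cβ * Real.log x ^ (α + 1) := by positivity
    have g2 : 0 ≤ Cα * Cβ * Real.log x ^ (β + 1) := by positivity
    have g3 : 0 ≤ Cα * Real.log x ^ (α + 1) := by positivity
    have g4 : 0 ≤ Cβ * Real.log x ^ (β + 1) := by positivity
    have g5 : 0 ≤ D * (1 + Real.log x ^ (α + 1) + Real.log x ^ (β + 1)) := by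
      apply mul_nonneg hD0; linarith
    linarith
  · -- y small
    have hFα : Ff α y ≤ Ff α y₀ := Ff_mono α hcase.le
    have hFβ : Ff β y ≤ Ff β y₀ := Ff_mono β hcase.le
    have hD0 : (0:ℝ) ≤ D := add_nonneg hD1 hD2
    have hbound : |Ff α y * Ff β y - Real.log y ^ (α + β + 2) / ((α + 1) * (β + 1))| ≤ D := by
      have hmain : Real.log y ^ (α + β + 2) / ((α + 1) * (β + 1))
          ≤ Real.log y₀ ^ (α + β + 2) / ((α + 1) * (β + 1)) := by
        have h1y : (0:ℝ) < y := by linarith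
        have hle : y ≤ y₀ := hcase.le
        gcongr
      have h0 : 0 ≤ Real.log y ^ (α + β + 2) / ((α + 1) * (β + 1)) := by
        apply div_nonneg _ hab1.le
        exact Real.rpow_nonneg hly0 _
      have hprod_le : Ff α y * Ff β y ≤ Ff α y₀ * Ff β y₀ :=
        mul_le_mul hFα hFβ (Ff_nonneg _ _) (Ff_nonneg _ _)
      have h0' : 0 ≤ Ff α y * Ff β y := mul_nonneg (Ff_nonneg _ _) (Ff_nonneg _ _)
      rw [abs_le, hD]
      constructor <;> nlinarith
    refine le_trans hbound ?_
    have hfac : (1:ℝ) ≤ 1 + Real.log x ^ (α + 1) + Real.log x ^ (β + 1) := by linarith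
    have hK0 : (0:ℝ) ≤ (Cα + 1) * (Cβ + 1) := by positivity
    calc D = D * 1 := (mul_one D).symm
      _ ≤ ((Cα + 1) * (Cβ + 1) + D) * (1 + Real.log x ^ (α + 1) + Real.log x ^ (β + 1)) :=
          mul_le_mul (by linarith) hfac zero_le_one (by linarith)

lemma log_rpow_littleO {a b : ℝ} (hab : a < b) :
    (fun x : ℝ => Real.log x ^ a) =o[atTop] (fun x : ℝ => Real.log x ^ b) := by
  have h : (fun u : ℝ => u ^ a) =o[atTop] (fun u : ℝ => u ^ b) := by
    rw [isLittleO_iff_tendsto']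
    · have h0 : Tendsto (fun u : ℝ => u ^ (a - b)) atTop (nhds 0) := by
        have := tendsto_rpow_neg_atTop (y := b - a) (by linarith)
        simpa [neg_sub] using this
      apply h0.congr'
      filter_upwards [eventually_gt_atTop (0:ℝ)] with u hu
      rw [Real.rpow_sub hu]
    · filter_upwards [eventually_ge_atTop (1:ℝ)] with u hu h0
      exfalso
      have : (0:ℝ) < u ^ b := Real.rpow_pos_of_pos (by linarith) b
      linarith [h0 ▸ this]
  exact h.comp_tendsto Real.tendsto_log_atTop

theorem stmt_5 (α β : ℝ) (hα : 0 ≤ α) (hβ : 0 ≤ β) :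
    (fun x : ℝ =>
      (∑ n₁ ∈ Finset.Icc 1 ⌊x⌋₊, ∑ n₂ ∈ Finset.Icc 1 ⌊x⌋₊,
        (Real.log n₁) ^ α * (Real.log n₂) ^ β *
          Real.log (min (x / n₁) (x / n₂)) / (n₁ * n₂))
      - (Real.log x) ^ (α + β + 3) / ((α + 1) * (β + 1) * (α + β + 3)))
    =o[atTop] (fun x : ℝ => (Real.log x) ^ (α + β + 3)) := by
  obtain ⟨K, hK0, hKb⟩ := prod_approx α β hα hβ
  have hab1 : (0:ℝ) < (α + 1) * (β + 1) := by nlinarith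
  -- the eventual bound
  have hbound : ∀ᶠ x : ℝ in atTop,
      |(∑ n₁ ∈ Finset.Icc 1 ⌊x⌋₊, ∑ n₂ ∈ Finset.Icc 1 ⌊x⌋₊,
        (Real.log n₁) ^ α * (Real.log n₂) ^ β *
          Real.log (min (x / n₁) (x / n₂)) / (n₁ * n₂))
      - (Real.log x) ^ (α + β + 3) / ((α + 1) * (β + 1) * (α + β + 3))|
      ≤ K * (Real.log x ^ (1:ℝ) + Real.log x ^ (α + 2) + Real.log x ^ (β + 2)) := by
    filter_upwards [eventually_ge_atTop (Real.exp 1)] with x hx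
    have hx0 : (0:ℝ) < x := lt_of_lt_of_le (Real.exp_pos 1) hx
    have hx1 : (1:ℝ) ≤ x := le_trans (by
      have := Real.add_one_le_exp (1:ℝ); linarith) hx
    set L := Real.log x with hLdef
    have hL1 : (1:ℝ) ≤ L := (Real.le_log_iff_exp_le hx0).2 hx
    have hL0 : (0:ℝ) ≤ L := by linarith
    -- facts about y_t
    have hy_facts : ∀ t ∈ Set.Ioc (0:ℝ) L, 1 ≤ x * Real.exp (-t) ∧ x * Real.exp (-t) ≤ x
        ∧ Real.log (x * Real.exp (-t)) = L - t := by
      intro t ht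
      obtain ⟨ht0, htL⟩ := ht
      have he1 : Real.exp (-L) ≤ Real.exp (-t) := Real.exp_le_exp.2 (by linarith)
      have he2 : Real.exp (-t) ≤ 1 := Real.exp_le_one_iff.2 (by linarith)
      have heL : Real.exp (-L) = x⁻¹ := by
        rw [hLdef, Real.exp_neg, Real.exp_log hx0]
      refine ⟨?_, ?_, ?_⟩
      · calc (1:ℝ) = x * x⁻¹ := (mul_inv_cancel₀ (ne_of_gt hx0)).symm
          _ ≤ x * Real.exp (-t) := by rw [← heL]; exact mul_le_mul_of_nonneg_left he1 hx0.le
      · nlinarith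
      · rw [Real.log_mul (ne_of_gt hx0) (ne_of_gt (Real.exp_pos _)), Real.log_exp, ← hLdef]
        ring
    -- integrand functions
    set G : ℝ → ℝ := fun t => Ff α (x * Real.exp (-t)) * Ff β (x * Real.exp (-t)) with hG
    set M : ℝ → ℝ := fun t => (L - t) ^ (α + β + 2) / ((α + 1) * (β + 1)) with hM
    -- integrability
    have hGanti : AntitoneOn G (Set.uIcc 0 L) := by
      rw [Set.uIcc_of_le hL0]
      intro t₁ _ t₂ _ h12
      have hy12 : x * Real.exp (-t₂) ≤ x * Real.exp (-t₁) :=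
        mul_le_mul_of_nonneg_left (Real.exp_le_exp.2 (by linarith)) hx0.le
      exact mul_le_mul (Ff_mono α hy12) (Ff_mono β hy12) (Ff_nonneg _ _) (Ff_nonneg _ _)
    have hGint : MeasureTheory.IntegrableOn G (Set.Ioc 0 L) := by
      have := hGanti.intervalIntegrable (μ := volume)
      rwa [intervalIntegrable_iff_integrableOn_Ioc_of_le hL0] at this
    have hMcont : Continuous M := by
      apply Continuous.div_const
      apply Continuous.rpow_const (by continuity)
      intro t; exact Or.inr (by linarith)
    have hMint : MeasureTheory.IntegrableOn M (Set.Ioc 0 L) := by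
      have := hMcont.intervalIntegrable (μ := volume) 0 L
      rwa [intervalIntegrable_iff_integrableOn_Ioc_of_le hL0] at this
    -- integral identities
    have hS := exchange α β x hx1
    have hMval : ∫ t in Set.Ioc (0:ℝ) L, M t
        = L ^ (α + β + 3) / ((α + 1) * (β + 1) * (α + β + 3)) := by
      rw [hM]
      rw [MeasureTheory.integral_div]
      rw [integral_main (α + β + 2) L (by linarith) hL0]
      rw [show α + β + 2 + 1 = α + β + 3 from by ring]
      rw [div_div]
      ring_nf
    -- pointwise bound
    have hpt : ∀ t ∈ Set.Ioc (0:ℝ) L, ‖G t - M t‖ ≤ K * (1 + L ^ (α + 1) + L ^ (β + 1)) := by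
      intro t ht
      obtain ⟨hy1, hyx, hylog⟩ := hy_facts t ht
      have := hKb x (x * Real.exp (-t)) hy1 hyx
      rw [hylog] at this
      rw [Real.norm_eq_abs]
      calc |G t - M t| = |Ff α (x * Real.exp (-t)) * Ff β (x * Real.exp (-t))
          - (L - t) ^ (α + β + 2) / ((α + 1) * (β + 1))| := rfl
        _ ≤ K * (1 + Real.log x ^ (α + 1) + Real.log x ^ (β + 1)) := this
        _ = K * (1 + L ^ (α + 1) + L ^ (β + 1)) := rfl
    -- assemble
    rw [hS, ← hMval, ← MeasureTheory.integral_sub hGint hMint]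
    have hvol : volume (Set.Ioc (0:ℝ) L) < ⊤ := measure_Ioc_lt_top
    have := MeasureTheory.norm_setIntegral_le_of_norm_le_const hvol hpt
    rw [Real.norm_eq_abs] at this
    refine le_trans this ?_
    rw [Real.volume_real_Ioc_of_le hL0, sub_zero]
    have hLpos : (0:ℝ) < L := by linarith
    have e1 : L ^ (α + 1) * L = L ^ (α + 2) := by
      rw [show α + 2 = α + 1 + 1 from by ring, Real.rpow_add hLpos (α + 1) 1, Real.rpow_one]
    have e2 : L ^ (β + 1) * L = L ^ (β + 2) := by
      rw [show β + 2 = β + 1 + 1 from by ring, Real.rpow_add hLpos (β + 1) 1, Real.rpow_one]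
    have e3 : L ^ (1:ℝ) = L := Real.rpow_one L
    have : K * (1 + L ^ (α + 1) + L ^ (β + 1)) * L
        = K * (L ^ (1:ℝ) + L ^ (α + 2) + L ^ (β + 2)) := by
      rw [← e1, ← e2, e3]; ring
    rw [this]
  -- conclude via little-o
  have hlit : (fun x : ℝ => Real.log x ^ (1:ℝ) + Real.log x ^ (α + 2) + Real.log x ^ (β + 2))
      =o[atTop] (fun x : ℝ => Real.log x ^ (α + β + 3)) :=
    ((log_rpow_littleO (by linarith)).add (log_rpow_littleO (by linarith))).add
      (log_rpow_littleO (by linarith))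
  refine IsBigO.trans_isLittleO ?_ hlit
  rw [isBigO_iff]
  refine ⟨K, ?_⟩
  filter_upwards [hbound, eventually_ge_atTop (Real.exp 1)] with x hb hx
  have hx0 : (0:ℝ) < x := lt_of_lt_of_le (Real.exp_pos 1) hx
  have hL1 : (1:ℝ) ≤ Real.log x := (Real.le_log_iff_exp_le hx0).2 hx
  have hg0 : 0 ≤ Real.log x ^ (1:ℝ) + Real.log x ^ (α + 2) + Real.log x ^ (β + 2) := by
    have h1 : 0 ≤ Real.log x ^ (1:ℝ) := Real.rpow_nonneg (by linarith) _
    have h2 : 0 ≤ Real.log x ^ (α + 2) := Real.rpow_nonneg (by linarith) _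
    have h3 : 0 ≤ Real.log x ^ (β + 2) := Real.rpow_nonneg (by linarith) _
    exact add_nonneg (add_nonneg h1 h2) h3
  rw [Real.norm_eq_abs, Real.norm_eq_abs, abs_of_nonneg hg0]
  exact hb
end

section
/- Let a : ℕ × ℕ → ℂ and M(x,y) = Σ_{n₁ ≤ x, n₂ ≤ y} a(n₁,n₂). Then Σ_{n₁ ≤ x, n₂ ≤ y} a(n₁,n₂)/(n₁ n₂) = Σ_{n₁ ≤ x, n₂ ≤ y} M(n₁,n₂)/(n₁(n₁+1)n₂(n₂+1)) + Σ_{n₁ ≤ x} M(n₁,y)/(n₁(n₁+1)(⌊y⌋+1)) + Σ_{n₂ ≤ y} M(x,n₂)/(n₂(n₂+1)(⌊x⌋+1)) + M(x,y)/((⌊x⌋+1)(⌊y⌋+1)). -/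
open Finset


lemma tele (n N : ℕ) (hn : 1 ≤ n) (hN : n ≤ N) :
    ∑ m ∈ Finset.Icc n N, (1 : ℂ) / ((m:ℂ)*((m:ℂ)+1)) = 1/(n:ℂ) - 1/((N:ℂ)+1) := by
  induction N with
  | zero => omega
  | succ N ih =>
    have h1 : ((N:ℂ)) + 1 ≠ 0 := Nat.cast_add_one_ne_zero N
    have h2 : ((N:ℂ)) + 1 + 1 ≠ 0 := by
      have := Nat.cast_add_one_ne_zero (R := ℂ) (N+1); push_cast at this; exact this
    rcases Nat.lt_or_ge N n with h | h
    · have hnn : n = N + 1 := by omega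
      subst hnn
      rw [Finset.Icc_self, Finset.sum_singleton]
      push_cast
      field_simp
      ring
    · rw [Finset.sum_Icc_succ_top (by omega), ih h]
      have h3 : ((n:ℂ)) ≠ 0 := Nat.cast_ne_zero.2 (by omega)
      push_cast
      field_simp
      ring

lemma swapIcc (X : ℕ) (g : ℕ → ℕ → ℂ) :
    ∑ n ∈ Finset.Icc 1 X, ∑ m ∈ Finset.Icc n X, g n m
    = ∑ m ∈ Finset.Icc 1 X, ∑ n ∈ Finset.Icc 1 m, g n m := by
  rw [Finset.sum_sigma', Finset.sum_sigma']
  apply Finset.sum_nbij' (fun p => ⟨p.2, p.1⟩) (fun p => ⟨p.2, p.1⟩) <;>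
    simp +contextual [Finset.mem_Icc] <;> omega

lemma abel1 (N : ℕ) (hN : 1 ≤ N) (b : ℕ → ℂ) :
    ∑ n ∈ Finset.Icc 1 N, b n / (n:ℂ)
    = ∑ m ∈ Finset.Icc 1 N, (∑ n ∈ Finset.Icc 1 m, b n) / ((m:ℂ)*((m:ℂ)+1))
      + (∑ n ∈ Finset.Icc 1 N, b n) / ((N:ℂ)+1) := by
  have h1 : ∀ n ∈ Finset.Icc 1 N, b n / (n:ℂ)
      = ∑ m ∈ Finset.Icc n N, b n / ((m:ℂ)*((m:ℂ)+1)) + b n / ((N:ℂ)+1) := by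
    intro n hn
    rw [Finset.mem_Icc] at hn
    have ht := tele n N hn.1 hn.2
    have h2 : ∑ m ∈ Finset.Icc n N, b n / ((m:ℂ)*((m:ℂ)+1))
        = b n * ∑ m ∈ Finset.Icc n N, (1:ℂ)/((m:ℂ)*((m:ℂ)+1)) := by
      rw [Finset.mul_sum]; exact Finset.sum_congr rfl fun m _ => by ring
    rw [h2, ht]; ring
  rw [Finset.sum_congr rfl h1, Finset.sum_add_distrib, ← Finset.sum_div, swapIcc]
  congr 1
  exact Finset.sum_congr rfl fun m _ => by rw [Finset.sum_div]



theorem stmt_6 (a : ℕ → ℕ → ℂ) (x y : ℝ) (hx : 1 ≤ x) (hy : 1 ≤ y)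
    (M : ℝ → ℝ → ℂ)
    (hM : ∀ u v : ℝ, M u v = ∑ n₁ ∈ Finset.Icc 1 ⌊u⌋₊, ∑ n₂ ∈ Finset.Icc 1 ⌊v⌋₊, a n₁ n₂) :
    ∑ n₁ ∈ Finset.Icc 1 ⌊x⌋₊, ∑ n₂ ∈ Finset.Icc 1 ⌊y⌋₊, a n₁ n₂ / ((n₁ : ℂ) * n₂)
    = (∑ n₁ ∈ Finset.Icc 1 ⌊x⌋₊, ∑ n₂ ∈ Finset.Icc 1 ⌊y⌋₊,
        M n₁ n₂ / ((n₁ : ℂ) * (n₁ + 1) * n₂ * (n₂ + 1)))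
      + (∑ n₁ ∈ Finset.Icc 1 ⌊x⌋₊,
          M n₁ y / ((n₁ : ℂ) * (n₁ + 1) * ((⌊y⌋₊ : ℂ) + 1)))
      + (∑ n₂ ∈ Finset.Icc 1 ⌊y⌋₊,
          M x n₂ / ((n₂ : ℂ) * (n₂ + 1) * ((⌊x⌋₊ : ℂ) + 1)))
      + M x y / (((⌊x⌋₊ : ℂ) + 1) * ((⌊y⌋₊ : ℂ) + 1)) := by
  set X := ⌊x⌋₊ with hXdef
  set Y := ⌊y⌋₊ with hYdef
  have hX : 1 ≤ X := Nat.le_floor (by exact_mod_cast hx)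
  have hY : 1 ≤ Y := Nat.le_floor (by exact_mod_cast hy)
  have hMn : ∀ p q : ℕ, M p q = ∑ n₁ ∈ Finset.Icc 1 p, ∑ n₂ ∈ Finset.Icc 1 q, a n₁ n₂ := by
    intro p q; rw [hM]; simp
  have hMy : ∀ p : ℕ, M p y = ∑ n₁ ∈ Finset.Icc 1 p, ∑ n₂ ∈ Finset.Icc 1 Y, a n₁ n₂ := by
    intro p; rw [hM]; simp [hYdef]
  have hMx : ∀ q : ℕ, M x q = ∑ n₁ ∈ Finset.Icc 1 X, ∑ n₂ ∈ Finset.Icc 1 q, a n₁ n₂ := by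
    intro q; rw [hM]; simp [hXdef]
  have hMxy : M x y = ∑ n₁ ∈ Finset.Icc 1 X, ∑ n₂ ∈ Finset.Icc 1 Y, a n₁ n₂ := hM x y
  -- inner Abel in the second variable, for sums up to p
  have inner : ∀ p : ℕ, (∑ n₁ ∈ Finset.Icc 1 p, ∑ n₂ ∈ Finset.Icc 1 Y, a n₁ n₂ / (n₂:ℂ))
      = ∑ m₂ ∈ Finset.Icc 1 Y, M (p:ℝ) (m₂:ℝ) / ((m₂:ℂ)*((m₂:ℂ)+1)) + M (p:ℝ) y / ((Y:ℂ)+1) := by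
    intro p
    rw [Finset.sum_comm]
    have hc : ∀ n₂ ∈ Finset.Icc 1 Y, ∑ n₁ ∈ Finset.Icc 1 p, a n₁ n₂ / (n₂:ℂ)
        = (∑ n₁ ∈ Finset.Icc 1 p, a n₁ n₂) / (n₂:ℂ) := fun n₂ _ => (Finset.sum_div _ _ _).symm
    rw [Finset.sum_congr rfl hc, abel1 Y hY (fun n₂ => ∑ n₁ ∈ Finset.Icc 1 p, a n₁ n₂)]
    congr 1
    · refine Finset.sum_congr rfl fun m₂ _ => ?_
      rw [hMn p m₂, Finset.sum_comm]
    · rw [hMy p, Finset.sum_comm]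
  -- step 1: rewrite LHS and apply Abel in the first variable
  have step1 : ∑ n₁ ∈ Finset.Icc 1 X, ∑ n₂ ∈ Finset.Icc 1 Y, a n₁ n₂ / ((n₁:ℂ) * n₂)
      = ∑ n₁ ∈ Finset.Icc 1 X, (∑ n₂ ∈ Finset.Icc 1 Y, a n₁ n₂ / (n₂:ℂ)) / (n₁:ℂ) := by
    refine Finset.sum_congr rfl fun n₁ _ => ?_
    rw [Finset.sum_div]
    exact Finset.sum_congr rfl fun n₂ _ => by rw [div_div, mul_comm]
  rw [step1, abel1 X hX (fun n₁ => ∑ n₂ ∈ Finset.Icc 1 Y, a n₁ n₂ / (n₂:ℂ))]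
  have hA : ∀ m₁ ∈ Finset.Icc 1 X,
      (∑ n₁ ∈ Finset.Icc 1 m₁, ∑ n₂ ∈ Finset.Icc 1 Y, a n₁ n₂ / (n₂:ℂ)) / ((m₁:ℂ)*((m₁:ℂ)+1))
      = (∑ m₂ ∈ Finset.Icc 1 Y, M (m₁:ℝ) (m₂:ℝ) / ((m₁:ℂ)*((m₁:ℂ)+1)*(m₂:ℂ)*((m₂:ℂ)+1)))
        + M (m₁:ℝ) y / ((m₁:ℂ)*((m₁:ℂ)+1)*((Y:ℂ)+1)) := by
    intro m₁ _
    rw [inner m₁, add_div, Finset.sum_div]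
    congr 1
    · exact Finset.sum_congr rfl fun m₂ _ => by rw [div_div]; ring
    · rw [div_div]; ring
  rw [Finset.sum_congr rfl hA, Finset.sum_add_distrib, inner X]
  have hB : ∀ q : ℕ, M (X:ℝ) (q:ℝ) = M x (q:ℝ) := fun q => by rw [hMn, hMx]
  have hBy : M (X:ℝ) y = M x y := by rw [hMy, hMxy]
  rw [add_div, Finset.sum_div, hBy]
  have hC : ∀ m₂ ∈ Finset.Icc 1 Y, M (X:ℝ) (m₂:ℝ) / ((m₂:ℂ)*((m₂:ℂ)+1)) / ((X:ℂ)+1)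
      = M x (m₂:ℝ) / ((m₂:ℂ)*((m₂:ℂ)+1)*((X:ℂ)+1)) := fun m₂ _ => by
    rw [hB m₂, div_div]
  rw [Finset.sum_congr rfl hC, div_div]
  ring
end

section
/- For every positive integer k and prime p, the Dirichlet inverse μ_k of the k-fold two-variable convolution τ_k = 1^{*k} satisfies μ_k(p^{ν₁}, p^{ν₂}) = (−1)^{ν₁+ν₂} C(k,ν₁) C(k,ν₂) if ν₁, ν₂ ≤ k, and 0 otherwise, where C(k,ν) is a binomial coefficient. -/
open Finset

/-- Two-variable Dirichlet convolution. -/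
noncomputable def dconv (f g : ℕ → ℕ → ℂ) : ℕ → ℕ → ℂ := fun n₁ n₂ =>
  ∑ d₁ ∈ n₁.divisors, ∑ d₂ ∈ n₂.divisors, f d₁ d₂ * g (n₁ / d₁) (n₂ / d₂)

/-- The identity for two-variable Dirichlet convolution. -/
noncomputable def ddelta : ℕ → ℕ → ℂ := fun n₁ n₂ => if n₁ = 1 ∧ n₂ = 1 then 1 else 0

/-- `dtau k` is the `k`-fold convolution of the constant-one function (`dtau 1 = 1`). -/
noncomputable def dtau : ℕ → ℕ → ℕ → ℂ
  | 0 => ddelta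
  | k + 1 => dconv (fun _ _ => 1) (dtau k)

set_option maxRecDepth 8000

noncomputable def Tfun : ℕ → ℕ → ℂ
  | 0 => fun n => if n = 1 then 1 else 0
  | k + 1 => fun n => ∑ d ∈ n.divisors, Tfun k (n / d)

lemma dtau_eq_T (k : ℕ) : ∀ n₁ n₂, dtau k n₁ n₂ = Tfun k n₁ * Tfun k n₂ := by
  induction k with
  | zero =>
    intro n₁ n₂
    show ddelta n₁ n₂ = _
    by_cases h1 : n₁ = 1 <;> by_cases h2 : n₂ = 1 <;> simp [ddelta, Tfun, h1, h2]
  | succ k ih =>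
    intro n₁ n₂
    show dconv (fun _ _ => 1) (dtau k) n₁ n₂ = _
    unfold dconv
    have : ∀ d₁ ∈ n₁.divisors, ∑ d₂ ∈ n₂.divisors,
        (fun _ _ => (1:ℂ)) d₁ d₂ * dtau k (n₁ / d₁) (n₂ / d₂)
        = ∑ d₂ ∈ n₂.divisors, Tfun k (n₁ / d₁) * Tfun k (n₂ / d₂) := by
      intro d₁ _
      refine Finset.sum_congr rfl fun d₂ _ => ?_
      simp [ih]
    rw [Finset.sum_congr rfl this]
    show _ = Tfun (k+1) n₁ * Tfun (k+1) n₂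
    rw [show Tfun (k+1) n₁ = ∑ d ∈ n₁.divisors, Tfun k (n₁ / d) from rfl,
      show Tfun (k+1) n₂ = ∑ d ∈ n₂.divisors, Tfun k (n₂ / d) from rfl,
      Finset.sum_mul_sum]

lemma pp_eq_one {p : ℕ} (hp : p.Prime) (ν : ℕ) : p ^ ν = 1 ↔ ν = 0 := by
  constructor
  · intro h
    by_contra hne
    exact absurd h (Nat.one_lt_pow hne hp.one_lt).ne'
  · rintro rfl; rfl

lemma sum_divisors_pp {p : ℕ} (hp : p.Prime) (ν : ℕ) (f : ℕ → ℂ) :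
    ∑ d ∈ (p ^ ν).divisors, f d = ∑ i ∈ range (ν + 1), f (p ^ i) := by
  rw [Nat.divisors_prime_pow hp, Finset.sum_map]
  rfl

lemma sum_divisors_pp_div {p : ℕ} (hp : p.Prime) (ν : ℕ) (f : ℕ → ℂ) :
    ∑ d ∈ (p ^ ν).divisors, f (p ^ ν / d) = ∑ i ∈ range (ν + 1), f (p ^ (ν - i)) := by
  rw [sum_divisors_pp hp]
  refine Finset.sum_congr rfl fun i hi => ?_
  rw [Nat.pow_div (by simpa [Nat.lt_succ_iff] using hi) hp.pos]

lemma T_succ_pp {p : ℕ} (hp : p.Prime) (k a : ℕ) :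
    Tfun (k + 1) (p ^ a) = ∑ j ∈ range (a + 1), Tfun k (p ^ j) := by
  show ∑ d ∈ (p ^ a).divisors, Tfun k (p ^ a / d) = _
  rw [sum_divisors_pp_div hp]
  exact Finset.sum_range_reflect (fun j => Tfun k (p ^ j)) (a + 1)

lemma T_pp {p : ℕ} (hp : p.Prime) (d : ℕ) : ∀ a, Tfun (d + 1) (p ^ a) = ((d + a).choose d : ℂ) := by
  induction d with
  | zero =>
    intro a
    rw [T_succ_pp hp]
    have : ∀ j ∈ range (a + 1), Tfun 0 (p ^ j) = if j = 0 then (1:ℂ) else 0 := by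
      intro j _
      show (if p ^ j = 1 then (1:ℂ) else 0) = _
      simp only [pp_eq_one hp]
    rw [Finset.sum_congr rfl this, Finset.sum_ite_eq' (range (a+1)) 0]
    simp
  | succ d ih =>
    intro a
    rw [T_succ_pp hp]
    have : ∀ j ∈ range (a + 1), Tfun (d + 1) (p ^ j) = ((d + j).choose d : ℂ) :=
      fun j _ => ih j
    rw [Finset.sum_congr rfl this]
    have hnat : ∑ j ∈ range (a + 1), (d + j).choose d = (d + 1 + a).choose (d + 1) := by
      have h1 := Nat.sum_Icc_choose (d + a) d
      rw [← Finset.Ico_add_one_right_eq_Icc, Finset.sum_Ico_eq_sum_range] at h1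
      simpa [Nat.add_sub_cancel_left, add_comm, add_assoc, add_left_comm] using h1
    calc ∑ j ∈ range (a + 1), ((d + j).choose d : ℂ)
        = ((∑ j ∈ range (a + 1), (d + j).choose d : ℕ) : ℂ) := by push_cast; ring
      _ = _ := by rw [hnat]

open PowerSeries in
lemma coeff_one_sub_pow (k j : ℕ) :
    (PowerSeries.coeff j) ((1 - PowerSeries.X) ^ k) = (-1) ^ j * (k.choose j : ℂ) := by
  have h0 : ((1 : ℂ⟦X⟧) - X) ^ k
      = ∑ m ∈ range (k + 1), (PowerSeries.C (R := ℂ)) ((-1) ^ m * (k.choose m : ℂ)) * X ^ m := by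
    rw [show ((1 : ℂ⟦X⟧) - X) = -X + 1 by ring, add_pow]
    refine Finset.sum_congr rfl fun m hm => ?_
    rw [map_mul, map_pow, map_neg, map_one, map_natCast]
    ring
  rw [h0, map_sum]
  have h1 : ∀ m ∈ range (k + 1),
      (PowerSeries.coeff j) ((PowerSeries.C (R := ℂ)) ((-1) ^ m * (k.choose m : ℂ)) * X ^ m)
      = if m = j then (-1) ^ m * (k.choose m : ℂ) else 0 := by
    intro m _
    rw [PowerSeries.coeff_C_mul, PowerSeries.coeff_X_pow]
    simp [eq_comm]
  rw [Finset.sum_congr rfl h1, Finset.sum_ite_eq' (range (k + 1)) j]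
  by_cases h : j ∈ range (k + 1)
  · simp [h]
  · simp only [h, if_false]
    rw [Nat.choose_eq_zero_of_lt (by simpa [Nat.lt_succ_iff] using h)]
    simp

lemma key_id (d ν : ℕ) :
    ∑ i ∈ range (ν + 1), ((-1) ^ i * ((d + 1).choose i : ℂ)) * ((d + (ν - i)).choose d : ℂ)
      = if ν = 0 then 1 else 0 := by
  have h := PowerSeries.mk_add_choose_mul_one_sub_pow_eq_one (S := ℂ) (d := d)
  have h2 := congrArg (PowerSeries.coeff ν) h
  rw [PowerSeries.coeff_mul, Finset.Nat.sum_antidiagonal_eq_sum_range_succ_mk] at h2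
  simp only [PowerSeries.coeff_mk, coeff_one_sub_pow, PowerSeries.coeff_one] at h2
  refine Eq.trans ?_ h2
  rw [← Finset.sum_range_reflect (fun x => ((d + x).choose d : ℂ) *
    ((-1) ^ (ν - x) * ((d + 1).choose (ν - x) : ℂ))) (ν + 1)]
  refine Finset.sum_congr rfl fun i hi => ?_
  have hi' : i ≤ ν := by simpa [Nat.lt_succ_iff] using hi
  have e1 : ν + 1 - 1 - i = ν - i := by omega
  have e2 : ν - (ν - i) = i := by omega
  rw [e1, e2]
  ring

/-- The key one-variable inversion identity. -/
lemma key_T {p : ℕ} (hp : p.Prime) (k : ℕ) (hk : 1 ≤ k) (ν : ℕ) :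
    ∑ i ∈ range (ν + 1), ((-1) ^ i * (k.choose i : ℂ)) * Tfun k (p ^ (ν - i))
      = if ν = 0 then 1 else 0 := by
  obtain ⟨d, rfl⟩ := Nat.exists_eq_add_of_le hk
  rw [add_comm 1 d]
  have : ∀ i ∈ range (ν + 1), ((-1) ^ i * ((d + 1).choose i : ℂ)) * Tfun (d + 1) (p ^ (ν - i))
      = ((-1) ^ i * ((d + 1).choose i : ℂ)) * ((d + (ν - i)).choose d : ℂ) := by
    intro i _
    rw [T_pp hp]
  rw [Finset.sum_congr rfl this, key_id]

theorem stmt_12 (k : ℕ) (hk : 1 ≤ k) (μk : ℕ → ℕ → ℂ)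
    (hμ : dconv μk (dtau k) = ddelta) (p : ℕ) (hp : p.Prime) (ν₁ ν₂ : ℕ) :
    μk (p ^ ν₁) (p ^ ν₂) =
      if ν₁ ≤ k ∧ ν₂ ≤ k then
        (-1) ^ (ν₁ + ν₂) * (Nat.choose k ν₁ : ℂ) * (Nat.choose k ν₂ : ℂ)
      else 0 := by
  set g : ℕ → ℂ := fun i => (-1) ^ i * (k.choose i : ℂ) with hg
  have hT1 : Tfun k 1 = 1 := by
    obtain ⟨d, rfl⟩ := Nat.exists_eq_add_of_le hk
    rw [add_comm 1 d]
    simpa using T_pp hp d 0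
  have hpow1 : ∀ ν : ℕ, p ^ ν = 1 ↔ ν = 0 := fun ν => pp_eq_one hp ν
  -- main claim
  have main : ∀ n : ℕ, ∀ ν₁ ν₂ : ℕ, ν₁ + ν₂ = n → μk (p ^ ν₁) (p ^ ν₂) = g ν₁ * g ν₂ := by
    intro n
    induction n using Nat.strong_induction_on with
    | _ n IH =>
      intro ν₁ ν₂ hn
      have heq := congrFun (congrFun hμ (p ^ ν₁)) (p ^ ν₂)
      unfold dconv at heq
      -- rewrite as double sum over ranges
      have hD : ∑ i ∈ range (ν₁ + 1), ∑ j ∈ range (ν₂ + 1),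
          μk (p ^ i) (p ^ j) * (Tfun k (p ^ (ν₁ - i)) * Tfun k (p ^ (ν₂ - j)))
          = ddelta (p ^ ν₁) (p ^ ν₂) := by
        rw [← heq]
        rw [sum_divisors_pp hp ν₁ (fun d₁ => ∑ d₂ ∈ (p ^ ν₂).divisors,
          μk d₁ d₂ * dtau k (p ^ ν₁ / d₁) (p ^ ν₂ / d₂))]
        refine Finset.sum_congr rfl fun i hi => ?_
        rw [sum_divisors_pp hp ν₂]
        refine Finset.sum_congr rfl fun j hj => ?_
        rw [Nat.pow_div (by simpa [Nat.lt_succ_iff] using hi) hp.pos,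
          Nat.pow_div (by simpa [Nat.lt_succ_iff] using hj) hp.pos, dtau_eq_T]
      have hE : ∑ i ∈ range (ν₁ + 1), ∑ j ∈ range (ν₂ + 1),
          (g i * g j) * (Tfun k (p ^ (ν₁ - i)) * Tfun k (p ^ (ν₂ - j)))
          = ddelta (p ^ ν₁) (p ^ ν₂) := by
        have : ∀ i ∈ range (ν₁ + 1), ∑ j ∈ range (ν₂ + 1),
            (g i * g j) * (Tfun k (p ^ (ν₁ - i)) * Tfun k (p ^ (ν₂ - j)))
            = (g i * Tfun k (p ^ (ν₁ - i))) * ∑ j ∈ range (ν₂ + 1),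
              (g j * Tfun k (p ^ (ν₂ - j))) := by
          intro i _
          rw [Finset.mul_sum]
          exact Finset.sum_congr rfl fun j _ => by ring
        rw [Finset.sum_congr rfl this, ← Finset.sum_mul, key_T hp k hk, key_T hp k hk]
        simp only [ddelta, hpow1]
        by_cases h1 : ν₁ = 0 <;> by_cases h2 : ν₂ = 0 <;> simp [h1, h2]
      -- subtract
      have hsub : ∑ q ∈ range (ν₁ + 1) ×ˢ range (ν₂ + 1),
          (μk (p ^ q.1) (p ^ q.2) - g q.1 * g q.2) *
            (Tfun k (p ^ (ν₁ - q.1)) * Tfun k (p ^ (ν₂ - q.2))) = 0 := by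
        rw [← Finset.sum_product'] at hD hE
        have e : ∀ q ∈ range (ν₁ + 1) ×ˢ range (ν₂ + 1),
            (μk (p ^ q.1) (p ^ q.2) - g q.1 * g q.2) *
              (Tfun k (p ^ (ν₁ - q.1)) * Tfun k (p ^ (ν₂ - q.2)))
            = μk (p ^ q.1) (p ^ q.2) * (Tfun k (p ^ (ν₁ - q.1)) * Tfun k (p ^ (ν₂ - q.2)))
              - g q.1 * g q.2 * (Tfun k (p ^ (ν₁ - q.1)) * Tfun k (p ^ (ν₂ - q.2))) :=
          fun q _ => by ring
        rw [Finset.sum_congr rfl e, Finset.sum_sub_distrib, hD, hE, sub_self]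
      rw [Finset.sum_eq_single (ν₁, ν₂)] at hsub
      · have h1 : (μk (p ^ ν₁) (p ^ ν₂) - g ν₁ * g ν₂) * (Tfun k 1 * Tfun k 1) = 0 := by
          simpa using hsub
        rw [hT1, one_mul, mul_one] at h1
        exact sub_eq_zero.mp h1
      · intro q hq hne
        obtain ⟨i, j⟩ := q
        simp only [Finset.mem_product, Finset.mem_range, Nat.lt_succ_iff] at hq
        have hij : i + j < n := by
          rcases Nat.lt_or_ge (i + j) n with h | h
          · exact h
          · exfalso
            have : i = ν₁ ∧ j = ν₂ := by omega
            exact hne (by simp [this.1, this.2])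
        rw [IH (i + j) hij i j rfl]
        simp
      · intro h
        exact absurd (Finset.mem_product.mpr ⟨self_mem_range_succ ν₁, self_mem_range_succ ν₂⟩) h
  have hmain := main (ν₁ + ν₂) ν₁ ν₂ rfl
  by_cases hc : ν₁ ≤ k ∧ ν₂ ≤ k
  · rw [if_pos hc, hmain, hg]
    simp only
    rw [pow_add]
    ring
  · rw [if_neg hc, hmain, hg]
    simp only
    rcases not_and_or.mp hc with h | h
    · rw [Nat.choose_eq_zero_of_lt (not_le.mp h)]
      simp
    · rw [Nat.choose_eq_zero_of_lt (not_le.mp h)]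
      simp
end

section
/- For every prime p, Σ_{b₁, b₂ = 0}^∞ μ̃(p^{b₁}, p^{b₂}) / p^{b₁+b₂} = (1 − 1/p)³ / (1 − 1/p²), where μ̃ is the Dirichlet inverse of the two-variable gcd function. -/
open Finset

noncomputable def nu (p : ℕ) : ℕ → ℕ → ℂ := fun a b =>
  if a = b then (if a = 0 then 1 else if a = 1 then 2 - p else 2 - 2*p)
  else if b = a + 1 ∨ a = b + 1 then (if min a b = 0 then -1 else (p:ℂ) - 1) else 0

lemma nu_symm (p a b : ℕ) : nu p a b = nu p b a := by
  unfold nu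
  split_ifs <;> first | rfl | omega | ring1 | exact (‹False›).elim | (simp only [false_or, or_false] at *; omega)

noncomputable def rsum (p : ℕ) : ℕ → ℕ → ℂ := fun a b =>
  if a = 0 then (if b = 0 then 1 else 0)
  else if b + 2 ≤ a then 0
  else if b + 1 = a then (if a = 1 then -1 else (p:ℂ) - 1)
  else if b = a then 1 - p
  else 0

lemma rsum_spec (p : ℕ) : ∀ b a, ∑ j ∈ range (b+1), nu p a j = rsum p a b := by
  intro b
  induction b with
  | zero =>
    intro a
    rw [Finset.sum_range_one]
    unfold nu rsum
    split_ifs <;> first | rfl | omega | ring1 | exact (‹False›).elim | (simp only [false_or, or_false] at *; omega)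
  | succ b ih =>
    intro a
    rw [Finset.sum_range_succ, ih]
    clear ih
    unfold nu rsum
    split_ifs <;> first | rfl | omega | ring1 | exact (‹False›).elim | (simp only [false_or, or_false] at *; omega)

lemma csum_spec (p : ℕ) (b a : ℕ) : ∑ i ∈ range (b+1), nu p i a = rsum p a b := by
  rw [← rsum_spec]
  exact Finset.sum_congr rfl fun i _ => nu_symm p i a


lemma conv_nu (p : ℕ) : ∀ a b : ℕ,
    ∑ i ∈ range (a+1), ∑ j ∈ range (b+1), nu p i j * (p:ℂ) ^ (min (a - i) (b - j))
      = (if a = 0 ∧ b = 0 then 1 else 0) := by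
  intro a
  induction a with
  | zero =>
    intro b
    rw [Finset.sum_range_one]
    have : ∀ j ∈ range (b+1), nu p 0 j * (p:ℂ) ^ (min (0 - 0) (b - j)) = nu p 0 j := by
      intro j hj; simp
    rw [Finset.sum_congr rfl this, rsum_spec]
    unfold rsum
    split_ifs <;> first | rfl | omega
  | succ a ih =>
    intro b
    match b with
    | 0 =>
      have h1 : ∀ i ∈ range (a+2), ∑ j ∈ range 1, nu p i j * (p:ℂ) ^ (min (a + 1 - i) (0 - j))
          = nu p i 0 := by
        intro i hi
        rw [Finset.sum_range_one]
        simp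
      rw [Finset.sum_congr rfl h1, csum_spec]
      unfold rsum
      split_ifs <;> first | rfl | omega | tauto
    | (b+1) =>
      rw [Finset.sum_range_succ]
      have hlast : ∑ j ∈ range (b+2), nu p (a+1) j * (p:ℂ) ^ (min (a + 1 - (a+1)) (b + 1 - j))
          = rsum p (a+1) (b+1) := by
        rw [← rsum_spec]
        refine Finset.sum_congr rfl fun j hj => ?_
        simp
      rw [hlast]
      have hinner : ∀ i ∈ range (a+1),
          ∑ j ∈ range (b+2), nu p i j * (p:ℂ) ^ (min (a + 1 - i) (b + 1 - j))
          = (p:ℂ) * ∑ j ∈ range (b+1), nu p i j * (p:ℂ) ^ (min (a - i) (b - j)) + nu p i (b+1) := by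
        intro i hi
        rw [Finset.mem_range] at hi
        rw [Finset.sum_range_succ, Finset.mul_sum]
        congr 1
        · refine Finset.sum_congr rfl fun j hj => ?_
          rw [Finset.mem_range] at hj
          have hmin : min (a + 1 - i) (b + 1 - j) = min (a - i) (b - j) + 1 := by omega
          rw [hmin, pow_succ]
          ring
        · have : min (a + 1 - i) (b + 1 - (b+1)) = 0 := by omega
          rw [this, pow_zero, mul_one]
      rw [Finset.sum_congr rfl hinner, Finset.sum_add_distrib, ← Finset.mul_sum, ih, csum_spec]
      clear hinner hlast ih
      unfold rsum
      split_ifs <;> first | omega | ring1 | exact (‹False›).elim | (simp only [false_or, or_false] at *; first | omega | ring1) | tauto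

lemma nu_far (p : ℕ) {i j : ℕ} (h1 : i ≠ j) (h2 : j ≠ i + 1) (h3 : i ≠ j + 1) :
    nu p i j = 0 := by
  unfold nu; split_ifs <;> first | rfl | omega


lemma gcd_pp {p : ℕ} (hp : 1 ≤ p) (m n : ℕ) : Nat.gcd (p^m) (p^n) = p ^ (min m n) := by
  rcases le_total m n with h | h
  · rw [min_eq_left h]; exact Nat.gcd_eq_left (pow_dvd_pow p h)
  · rw [min_eq_right h]; exact Nat.gcd_eq_right (pow_dvd_pow p h)


lemma mu_pp (μt : ℕ → ℕ → ℂ)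
    (hμ : dconv μt (fun n₁ n₂ => (Nat.gcd n₁ n₂ : ℂ)) = ddelta)
    (p : ℕ) (hp : p.Prime) :
    ∀ n a b, a + b ≤ n → μt (p ^ a) (p ^ b) = nu p a b := by
  intro n
  induction n using Nat.strong_induction_on with
  | _ n ih =>
    intro a b hab
    have hE := congrFun (congrFun hμ (p^a)) (p^b)
    unfold dconv ddelta at hE
    rw [Nat.sum_divisors_prime_pow hp] at hE
    have hE2 : ∑ i ∈ range (a+1), ∑ j ∈ range (b+1),
        μt (p^i) (p^j) * (p:ℂ)^(min (a-i) (b-j)) = (if a = 0 ∧ b = 0 then 1 else 0) := by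
      have hiff : ∀ k : ℕ, (p ^ k = 1) ↔ k = 0 := by
        intro k
        constructor
        · intro h
          by_contra hk
          exact hp.ne_one ((pow_eq_one_iff_left hk).mp h)
        · rintro rfl; rfl
      rw [show (if a = 0 ∧ b = 0 then (1:ℂ) else 0)
            = (if p^a = 1 ∧ p^b = 1 then 1 else 0) from
          (if_congr (by rw [hiff, hiff]) rfl rfl).symm, ← hE]
      refine Finset.sum_congr rfl fun i hi => ?_
      rw [Finset.mem_range] at hi
      rw [Nat.sum_divisors_prime_pow hp]
      refine (Finset.sum_congr rfl fun j hj => ?_).symm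
      rw [Finset.mem_range] at hj
      show μt (p^i) (p^j) * ((Nat.gcd (p^a / p^i) (p^b / p^j) : ℕ) : ℂ)
          = μt (p^i) (p^j) * (p:ℂ)^(min (a-i) (b-j))
      rw [Nat.pow_div (by omega) hp.pos, Nat.pow_div (by omega) hp.pos,
        gcd_pp hp.one_lt.le, Nat.cast_pow]
    have h3 : ∑ x ∈ range (a+1) ×ˢ range (b+1),
        (μt (p^x.1) (p^x.2) - nu p x.1 x.2) * (p:ℂ)^(min (a-x.1) (b-x.2)) = 0 := by
      rw [Finset.sum_product]
      simp only [sub_mul, Finset.sum_sub_distrib]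
      rw [hE2, conv_nu]
      ring
    rw [Finset.sum_eq_single (a, b)] at h3
    · simpa [Nat.sub_self, sub_eq_zero] using h3
    · intro x hx hne
      rw [Finset.mem_product, Finset.mem_range, Finset.mem_range] at hx
      have hane : x.1 ≠ a ∨ x.2 ≠ b := by
        by_contra hc
        push_neg at hc
        exact hne (Prod.ext hc.1 hc.2)
      have hlt : x.1 + x.2 < n := by omega
      rw [ih (x.1 + x.2) hlt x.1 x.2 le_rfl]
      ring
    · intro h
      exact absurd (Finset.mem_product.mpr
        ⟨Finset.self_mem_range_succ a, Finset.self_mem_range_succ b⟩) h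

theorem final (p : ℕ) (hp : p.Prime) :
    ∑' b : ℕ × ℕ, nu p b.1 b.2 / (p : ℂ) ^ (b.1 + b.2)
      = (1 - 1 / (p : ℂ)) ^ 3 / (1 - 1 / (p : ℂ) ^ 2) := by
  have hP0 : (p:ℂ) ≠ 0 := by
    simp [Nat.cast_ne_zero, hp.pos.ne']
  have hPnorm : 2 ≤ ‖(p:ℂ)‖ := by
    rw [Complex.norm_natCast]
    exact_mod_cast hp.two_le
  set y : ℂ := ((p:ℂ) ^ 2)⁻¹ with hydef
  have hy : ‖y‖ < 1 := by
    rw [hydef, norm_inv, norm_pow]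
    rw [inv_lt_one_iff₀]
    right
    nlinarith
  have hy1 : (1 : ℂ) - y ≠ 0 := by
    intro h
    rw [sub_eq_zero] at h
    rw [← h] at hy
    simp at hy
  -- component functions
  set fd : ℕ → ℂ := fun k => nu p k k / (p:ℂ) ^ (2*k) with hfd
  set fu : ℕ → ℂ := fun k => nu p k (k+1) / (p:ℂ) ^ (2*k+1) with hfu
  set fv : ℕ → ℂ := fun k => nu p (k+1) k / (p:ℂ) ^ (2*k+1) with hfv
  have hpinv : ∀ k : ℕ, ((p:ℂ) ^ (2*k))⁻¹ = y ^ k := by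
    intro k; rw [hydef, pow_mul, inv_pow]
  have h00 : nu p 0 0 = 1 := by unfold nu; norm_num
  have h11 : nu p 1 1 = 2 - (p:ℂ) := by unfold nu; norm_num
  have hkk : ∀ k : ℕ, nu p (k+2) (k+2) = 2 - 2*(p:ℂ) := by
    intro k; unfold nu; split_ifs <;> first | rfl | omega | exact (‹False›).elim
  have h01 : nu p 0 1 = -1 := by unfold nu; norm_num
  have hk1 : ∀ k : ℕ, nu p (k+1) (k+2) = (p:ℂ) - 1 := by
    intro k; unfold nu; split_ifs <;> first | rfl | omega | exact (‹False›).elim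
  have hfd_eq : fd = fun k => (2 - 2*(p:ℂ)) * y^k + ((if k = 0 then 2*(p:ℂ) - 1 else 0)
      + (if k = 1 then (p:ℂ) * y else 0)) := by
    funext k
    match k with
    | 0 =>
      show nu p 0 0 / (p:ℂ) ^ (2*0) = (2 - 2*(p:ℂ)) * y^0 + ((if (0:ℕ) = 0 then 2*(p:ℂ) - 1 else 0)
        + (if (0:ℕ) = 1 then (p:ℂ) * y else 0))
      rw [h00]
      norm_num
    | 1 =>
      show nu p 1 1 / (p:ℂ) ^ (2*1) = (2 - 2*(p:ℂ)) * y^1 + ((if (1:ℕ) = 0 then 2*(p:ℂ) - 1 else 0)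
        + (if (1:ℕ) = 1 then (p:ℂ) * y else 0))
      rw [h11, if_neg (by omega : ¬ (1:ℕ) = 0), if_pos rfl, div_eq_mul_inv, hpinv]
      ring
    | (k+2) =>
      show nu p (k+2) (k+2) / (p:ℂ) ^ (2*(k+2)) = (2 - 2*(p:ℂ)) * y^(k+2)
        + ((if (k+2 : ℕ) = 0 then 2*(p:ℂ) - 1 else 0) + (if (k+2:ℕ) = 1 then (p:ℂ) * y else 0))
      rw [hkk, if_neg (by omega : ¬ (k+2:ℕ) = 0), if_neg (by omega : ¬ (k+2:ℕ) = 1),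
        div_eq_mul_inv, hpinv]
      ring
  have hfu_eq : fu = fun k => (((p:ℂ) - 1) * (p:ℂ)⁻¹) * y^k + (if k = 0 then -1 else 0) := by
    funext k
    match k with
    | 0 =>
      show nu p 0 1 / (p:ℂ) ^ (2*0+1) = (((p:ℂ) - 1) * (p:ℂ)⁻¹) * y^0 + (if (0:ℕ) = 0 then -1 else 0)
      rw [h01, if_pos rfl, pow_one]
      field_simp
      ring
    | (k+1) =>
      show nu p (k+1) (k+1+1) / (p:ℂ) ^ (2*(k+1)+1)
        = (((p:ℂ) - 1) * (p:ℂ)⁻¹) * y^(k+1) + (if (k+1:ℕ) = 0 then -1 else 0)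
      rw [show k+1+1 = k+2 from rfl, hk1, if_neg (by omega : ¬ (k+1:ℕ) = 0), add_zero,
        pow_add, pow_one, div_eq_mul_inv, mul_inv, hpinv]
      ring
  have hfv_eq : ∀ k, fv k = fu k := by
    intro k
    show nu p (k+1) k / (p:ℂ) ^ (2*k+1) = nu p k (k+1) / (p:ℂ) ^ (2*k+1)
    congr 1
    unfold nu
    split_ifs <;> first | rfl | omega
  -- summabilities of the 1-dim pieces
  have hgeo : Summable (fun k : ℕ => y ^ k) := summable_geometric_of_norm_lt_one hy
  have hite0 : ∀ c : ℂ, Summable (fun k : ℕ => if k = 0 then c else 0) := by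
    intro c
    apply summable_of_ne_finset_zero (s := {0})
    intro b hb
    simp only [Finset.mem_singleton] at hb
    rw [if_neg hb]
  have hite1 : ∀ c : ℂ, Summable (fun k : ℕ => if k = 1 then c else 0) := by
    intro c
    apply summable_of_ne_finset_zero (s := {1})
    intro b hb
    simp only [Finset.mem_singleton] at hb
    rw [if_neg hb]
  have hsd : Summable fd := by
    rw [hfd_eq]
    exact ((hgeo.mul_left _).add ((hite0 _).add (hite1 _)))
  have hsu : Summable fu := by
    rw [hfu_eq]
    exact (hgeo.mul_left _).add (hite0 _)
  have hsv : Summable fv := by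
    have : fv = fu := funext hfv_eq
    rw [this]; exact hsu
  -- tsums of the 1-dim pieces
  have htd : ∑' k, fd k = (2 - 2*(p:ℂ)) * (1 - y)⁻¹ + ((2*(p:ℂ) - 1) + (p:ℂ) * y) := by
    rw [hfd_eq, Summable.tsum_add (hgeo.mul_left _) ((hite0 _).add (hite1 _)),
      Summable.tsum_add (hite0 _) (hite1 _), tsum_mul_left,
      tsum_geometric_of_norm_lt_one hy, tsum_ite_eq, tsum_ite_eq]
  have htu : ∑' k, fu k = ((p:ℂ) - 1) * (p:ℂ)⁻¹ * (1 - y)⁻¹ + (-1) := by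
    rw [hfu_eq, Summable.tsum_add (hgeo.mul_left _) (hite0 _), tsum_mul_left,
      tsum_geometric_of_norm_lt_one hy, tsum_ite_eq]
  have htv : ∑' k, fv k = ((p:ℂ) - 1) * (p:ℂ)⁻¹ * (1 - y)⁻¹ + (-1) := by
    rw [funext hfv_eq]; exact htu
  -- 2-dim pieces
  set Fd : ℕ × ℕ → ℂ := fun b => if b.2 = b.1 then fd b.1 else 0 with hFd
  set Fu : ℕ × ℕ → ℂ := fun b => if b.2 = b.1 + 1 then fu b.1 else 0 with hFu
  set Fv : ℕ × ℕ → ℂ := fun b => if b.1 = b.2 + 1 then fv b.2 else 0 with hFv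
  have hdecomp : (fun b : ℕ × ℕ => nu p b.1 b.2 / (p:ℂ) ^ (b.1 + b.2))
      = fun b => Fd b + (Fu b + Fv b) := by
    funext b
    obtain ⟨i, j⟩ := b
    rw [hFd, hFu, hFv]
    simp only
    by_cases h1 : j = i
    · subst h1
      rw [if_pos rfl, if_neg (by omega), if_neg (by omega)]
      show nu p j j / (p:ℂ) ^ (j + j) = nu p j j / (p:ℂ) ^ (2 * j) + (0 + 0)
      rw [Nat.two_mul]
      ring
    · by_cases h2 : j = i + 1
      · subst h2
        rw [if_neg h1, if_pos rfl, if_neg (by omega)]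
        show nu p i (i+1) / (p:ℂ) ^ (i + (i+1))
          = 0 + (nu p i (i+1) / (p:ℂ) ^ (2*i+1) + 0)
        rw [show 2*i+1 = i + (i+1) from by ring]
        ring
      · by_cases h3 : i = j + 1
        · subst h3
          rw [if_neg h1, if_neg h2, if_pos rfl]
          show nu p (j+1) j / (p:ℂ) ^ (j+1 + j)
            = 0 + (0 + nu p (j+1) j / (p:ℂ) ^ (2*j+1))
          rw [show 2*j+1 = (j+1) + j from by ring]
          ring
        · rw [if_neg h1, if_neg h2, if_neg h3, nu_far p (by omega) (by omega) h3]
          simp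
  -- injections
  have hinjd : Function.Injective (fun k : ℕ => ((k, k) : ℕ × ℕ)) := by
    intro a b h; exact (Prod.ext_iff.mp h).1
  have hinju : Function.Injective (fun k : ℕ => ((k, k+1) : ℕ × ℕ)) := by
    intro a b h; exact (Prod.ext_iff.mp h).1
  have hinjv : Function.Injective (fun k : ℕ => ((k+1, k) : ℕ × ℕ)) := by
    intro a b h; exact (Prod.ext_iff.mp h).2
  have hsuppd : ∀ x : ℕ × ℕ, x ∉ Set.range (fun k : ℕ => ((k, k) : ℕ × ℕ)) → Fd x = 0 := by
    intro x hx
    show (if x.2 = x.1 then fd x.1 else 0) = 0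
    rw [if_neg]
    intro h
    exact hx ⟨x.1, by rw [Prod.ext_iff]; exact ⟨rfl, h.symm⟩⟩
  have hsuppu : ∀ x : ℕ × ℕ, x ∉ Set.range (fun k : ℕ => ((k, k+1) : ℕ × ℕ)) → Fu x = 0 := by
    intro x hx
    show (if x.2 = x.1 + 1 then fu x.1 else 0) = 0
    rw [if_neg]
    intro h
    exact hx ⟨x.1, by rw [Prod.ext_iff]; exact ⟨rfl, h.symm⟩⟩
  have hsuppv : ∀ x : ℕ × ℕ, x ∉ Set.range (fun k : ℕ => ((k+1, k) : ℕ × ℕ)) → Fv x = 0 := by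
    intro x hx
    show (if x.1 = x.2 + 1 then fv x.2 else 0) = 0
    rw [if_neg]
    intro h
    exact hx ⟨x.2, by rw [Prod.ext_iff]; exact ⟨h.symm, rfl⟩⟩
  have hcompd : (Fd ∘ fun k : ℕ => ((k, k) : ℕ × ℕ)) = fd := by
    funext k; simp [hFd]
  have hcompu : (Fu ∘ fun k : ℕ => ((k, k+1) : ℕ × ℕ)) = fu := by
    funext k; simp [hFu]
  have hcompv : (Fv ∘ fun k : ℕ => ((k+1, k) : ℕ × ℕ)) = fv := by
    funext k; simp [hFv]
  have hSFd : Summable Fd := (hinjd.summable_iff hsuppd).mp (hcompd ▸ hsd)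
  have hSFu : Summable Fu := (hinju.summable_iff hsuppu).mp (hcompu ▸ hsu)
  have hSFv : Summable Fv := (hinjv.summable_iff hsuppv).mp (hcompv ▸ hsv)
  have hTd : ∑' b : ℕ × ℕ, Fd b = ∑' k, fd k := by
    rw [← hinjd.tsum_eq (Function.support_subset_iff'.mpr hsuppd)]
    exact tsum_congr fun k => by simp [hFd]
  have hTu : ∑' b : ℕ × ℕ, Fu b = ∑' k, fu k := by
    rw [← hinju.tsum_eq (Function.support_subset_iff'.mpr hsuppu)]
    exact tsum_congr fun k => by simp [hFu]
  have hTv : ∑' b : ℕ × ℕ, Fv b = ∑' k, fv k := by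
    rw [← hinjv.tsum_eq (Function.support_subset_iff'.mpr hsuppv)]
    exact tsum_congr fun k => by simp [hFv]
  calc ∑' b : ℕ × ℕ, nu p b.1 b.2 / (p:ℂ) ^ (b.1 + b.2)
      = ∑' b : ℕ × ℕ, (Fd b + (Fu b + Fv b)) := by rw [hdecomp]
    _ = (∑' b : ℕ × ℕ, Fd b) + ((∑' b : ℕ × ℕ, Fu b) + (∑' b : ℕ × ℕ, Fv b)) := by
        rw [Summable.tsum_add hSFd (hSFu.add hSFv), Summable.tsum_add hSFu hSFv]
    _ = ((2 - 2*(p:ℂ)) * (1 - y)⁻¹ + ((2*(p:ℂ) - 1) + (p:ℂ) * y))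
        + ((((p:ℂ) - 1) * (p:ℂ)⁻¹ * (1 - y)⁻¹ + (-1)) + (((p:ℂ) - 1) * (p:ℂ)⁻¹ * (1 - y)⁻¹ + (-1))) := by
        rw [hTd, hTu, hTv, htd, htu, htv]
    _ = (1 - 1 / (p:ℂ)) ^ 3 / (1 - 1 / (p:ℂ) ^ 2) := by
        have h2 : ((p:ℂ))^2 ≠ 0 := pow_ne_zero _ hP0
        have hq : ((p:ℂ))^2 - 1 ≠ 0 := by
          intro h
          apply hy1
          rw [hydef, sub_eq_zero, sub_eq_zero.mp h, inv_one]
        rw [hydef]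
        field_simp
        ring

theorem stmt_15 (μt : ℕ → ℕ → ℂ)
    (hμ : dconv μt (fun n₁ n₂ => (Nat.gcd n₁ n₂ : ℂ)) = ddelta)
    (p : ℕ) (hp : p.Prime) :
    ∑' b : ℕ × ℕ, μt (p ^ b.1) (p ^ b.2) / (p : ℂ) ^ (b.1 + b.2)
      = (1 - 1 / (p : ℂ)) ^ 3 / (1 - 1 / (p : ℂ) ^ 2) := by
  have hmu : ∀ b : ℕ × ℕ, μt (p ^ b.1) (p ^ b.2) = nu p b.1 b.2 := fun b =>
    mu_pp μt hμ p hp (b.1 + b.2) b.1 b.2 le_rfl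
  calc ∑' b : ℕ × ℕ, μt (p ^ b.1) (p ^ b.2) / (p : ℂ) ^ (b.1 + b.2)
      = ∑' b : ℕ × ℕ, nu p b.1 b.2 / (p : ℂ) ^ (b.1 + b.2) :=
        tsum_congr fun b => by rw [hmu b]
    _ = (1 - 1 / (p : ℂ)) ^ 3 / (1 - 1 / (p : ℂ) ^ 2) := final p hp
end

section
/- lim_{x → ∞} (1/(x² log x)) Σ_{n₁, n₂ ≤ x} σ(gcd(n₁, n₂)) = 1, where σ(n) is the sum of divisors of n. -/
open Filter Finset Topology

lemma icc_filter_dvd_card (N d : ℕ) :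
    ((Finset.Icc 1 N).filter (fun n => d ∣ n)).card = N / d := by
  rw [show Finset.Icc 1 N = Finset.Ioc 0 N from rfl]
  exact Nat.Ioc_filter_dvd_card_eq_div N d

lemma comb (N : ℕ) :
    ∑ n₁ ∈ Finset.Icc 1 N, ∑ n₂ ∈ Finset.Icc 1 N,
      ∑ d ∈ (Nat.gcd n₁ n₂).divisors, (d : ℝ)
    = ∑ d ∈ Finset.Icc 1 N, (d : ℝ) * ((N / d : ℕ) : ℝ)^2 := by
  have h1 : ∀ n₁ ∈ Finset.Icc 1 N, ∀ n₂ ∈ Finset.Icc 1 N,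
      ∑ d ∈ (Nat.gcd n₁ n₂).divisors, (d : ℝ)
      = ∑ d ∈ Finset.Icc 1 N,
          (if d ∣ n₁ then (1:ℝ) else 0) * (if d ∣ n₂ then (d:ℝ) else 0) := by
    intro n₁ h₁ n₂ h₂
    simp only [Finset.mem_Icc] at h₁ h₂
    have hset : (Finset.Icc 1 N).filter (fun d => d ∣ n₁ ∧ d ∣ n₂)
        = (Nat.gcd n₁ n₂).divisors := by
      ext d
      simp only [Finset.mem_filter, Finset.mem_Icc, Nat.mem_divisors,
        Nat.dvd_gcd_iff]
      constructor
      · rintro ⟨⟨hd1, hdN⟩, hdvd⟩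
        exact ⟨hdvd, Nat.gcd_ne_zero_left (by omega)⟩
      · rintro ⟨⟨hd1, hd2⟩, hne⟩
        have hdpos : 0 < d := Nat.pos_of_dvd_of_pos hd1 (by omega)
        have : d ≤ n₁ := Nat.le_of_dvd (by omega) hd1
        exact ⟨⟨hdpos, by omega⟩, hd1, hd2⟩
    rw [← hset, Finset.sum_filter]
    apply Finset.sum_congr rfl
    intro d _
    by_cases hA : d ∣ n₁ <;> by_cases hB : d ∣ n₂ <;> simp [hA, hB]
  rw [Finset.sum_congr rfl (fun n₁ h₁ => Finset.sum_congr rfl (h1 n₁ h₁))]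
  rw [Finset.sum_congr rfl (fun n₁ (_ : n₁ ∈ Finset.Icc 1 N) => Finset.sum_comm),
    Finset.sum_comm]
  apply Finset.sum_congr rfl
  intro d _
  have hC : ∑ n ∈ Finset.Icc 1 N, (if d ∣ n then (d:ℝ) else 0)
      = ((N / d : ℕ) : ℝ) * d := by
    rw [← Finset.sum_filter, Finset.sum_const, icc_filter_dvd_card]
    simp [mul_comm]
  have h1C : ∑ n ∈ Finset.Icc 1 N, (if d ∣ n then (1:ℝ) else 0)
      = ((N / d : ℕ) : ℝ) := by
    rw [← Finset.sum_filter, Finset.sum_const, icc_filter_dvd_card]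
    simp
  calc ∑ n₁ ∈ Finset.Icc 1 N, ∑ n₂ ∈ Finset.Icc 1 N,
        (if d ∣ n₁ then (1:ℝ) else 0) * (if d ∣ n₂ then (d:ℝ) else 0)
      = ∑ n₁ ∈ Finset.Icc 1 N,
        (if d ∣ n₁ then (1:ℝ) else 0) * (((N / d : ℕ) : ℝ) * d) := by
        refine Finset.sum_congr rfl fun n₁ _ => ?_
        rw [← Finset.mul_sum, hC]
    _ = ((N / d : ℕ) : ℝ) * (((N / d : ℕ) : ℝ) * d) := by
        rw [← Finset.sum_mul, h1C]
    _ = (d : ℝ) * ((N / d : ℕ) : ℝ)^2 := by ring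

lemma harmonic_real (N : ℕ) :
    (harmonic N : ℝ) = ∑ d ∈ Finset.Icc 1 N, (d : ℝ)⁻¹ := by
  rw [harmonic_eq_sum_Icc]
  push_cast
  rfl

theorem stmt_16 :
    Tendsto (fun x : ℝ =>
      (1 / (x ^ 2 * Real.log x)) *
        ∑ n₁ ∈ Finset.Icc 1 ⌊x⌋₊, ∑ n₂ ∈ Finset.Icc 1 ⌊x⌋₊,
          ∑ d ∈ (Nat.gcd n₁ n₂).divisors, (d : ℝ))
      atTop (𝓝 1) := by
  have hinv : Tendsto (fun x : ℝ => (Real.log x)⁻¹) atTop (𝓝 0) :=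
    Real.tendsto_log_atTop.inv_tendsto_atTop
  have hlo : Tendsto (fun x : ℝ => 1 - 2 * (Real.log x)⁻¹) atTop (𝓝 1) := by
    have := (hinv.const_mul 2).const_sub 1
    simpa using this
  have hhi : Tendsto (fun x : ℝ => 1 + (Real.log x)⁻¹) atTop (𝓝 1) := by
    have := hinv.const_add 1
    simpa using this
  have key : ∀ᶠ x : ℝ in atTop,
      (1 - 2 * (Real.log x)⁻¹ ≤ (1 / (x ^ 2 * Real.log x)) *
        ∑ n₁ ∈ Finset.Icc 1 ⌊x⌋₊, ∑ n₂ ∈ Finset.Icc 1 ⌊x⌋₊,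
          ∑ d ∈ (Nat.gcd n₁ n₂).divisors, (d : ℝ)) ∧
      ((1 / (x ^ 2 * Real.log x)) *
        ∑ n₁ ∈ Finset.Icc 1 ⌊x⌋₊, ∑ n₂ ∈ Finset.Icc 1 ⌊x⌋₊,
          ∑ d ∈ (Nat.gcd n₁ n₂).divisors, (d : ℝ) ≤ 1 + (Real.log x)⁻¹) := by
    filter_upwards [eventually_ge_atTop (3:ℝ)] with x hx3
    set N := ⌊x⌋₊ with hN
    have hx1 : (1:ℝ) ≤ x := by linarith
    have hx0 : (0:ℝ) < x := by linarith
    have hN1 : 1 ≤ N := Nat.one_le_floor_iff x |>.mpr hx1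
    have hNx : (N : ℝ) ≤ x := Nat.floor_le (le_of_lt hx0)
    have hxN1 : x < (N : ℝ) + 1 := Nat.lt_floor_add_one x
    have hlog1 : 1 ≤ Real.log x := by
      rw [show (1:ℝ) = Real.log (Real.exp 1) by simp]
      exact Real.log_le_log (Real.exp_pos 1) (le_trans (by linarith [Real.exp_one_lt_d9]) hx3)
    have hlogpos : 0 < Real.log x := by linarith
    have hx2pos : 0 < x ^ 2 := by positivity
    have hdenpos : 0 < x ^ 2 * Real.log x := by positivity
    rw [comb N]
    set H : ℝ := ∑ d ∈ Finset.Icc 1 N, (d : ℝ)⁻¹ with hH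
    set S : ℝ := ∑ d ∈ Finset.Icc 1 N, (d : ℝ) * ((N / d : ℕ) : ℝ)^2 with hS
    have hfl : ∀ d ∈ Finset.Icc 1 N, ((N / d : ℕ) : ℝ) = (⌊x / (d:ℝ)⌋₊ : ℝ) := by
      intro d hd
      rw [hN, ← Nat.floor_div_natCast]
    have hub : S ≤ x ^ 2 * H := by
      rw [hS, hH, Finset.mul_sum]
      apply Finset.sum_le_sum
      intro d hd
      have hd' := Finset.mem_Icc.mp hd
      have hdpos : (0:ℝ) < d := by exact_mod_cast hd'.1
      have h1 : ((N / d : ℕ) : ℝ) ≤ x / d := by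
        rw [hfl d hd]
        exact Nat.floor_le (by positivity)
      have h0 : (0:ℝ) ≤ ((N / d : ℕ) : ℝ) := by positivity
      calc (d:ℝ) * ((N / d : ℕ) : ℝ)^2 ≤ (d:ℝ) * (x / d)^2 := by
            apply mul_le_mul_of_nonneg_left _ (le_of_lt hdpos)
            exact pow_le_pow_left₀ h0 h1 2
        _ = x ^ 2 * (d:ℝ)⁻¹ := by field_simp
    have hlb : x ^ 2 * H - 2 * x ^ 2 ≤ S := by
      have step : ∀ d ∈ Finset.Icc 1 N,
          x ^ 2 * (d:ℝ)⁻¹ - 2 * x ≤ (d : ℝ) * ((N / d : ℕ) : ℝ)^2 := by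
        intro d hd
        have hd' := Finset.mem_Icc.mp hd
        have hdpos : (0:ℝ) < d := by exact_mod_cast hd'.1
        have hdx : (d:ℝ) ≤ x := le_trans (by exact_mod_cast hd'.2) hNx
        have hge : x / d - 1 ≤ ((N / d : ℕ) : ℝ) := by
          rw [hfl d hd]
          linarith [Nat.sub_one_lt_floor (x / (d:ℝ))]
        have hnn : (0:ℝ) ≤ x / d - 1 := by
          rw [le_sub_iff_add_le, zero_add, le_div_iff₀ hdpos, one_mul]
          exact hdx
        have hsq : (x / d - 1)^2 ≤ ((N / d : ℕ) : ℝ)^2 := pow_le_pow_left₀ hnn hge 2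
        have hmul : (d:ℝ) * (x / d - 1)^2 ≤ (d : ℝ) * ((N / d : ℕ) : ℝ)^2 :=
          mul_le_mul_of_nonneg_left hsq (le_of_lt hdpos)
        have hexp : (d:ℝ) * (x / d - 1)^2 = x ^ 2 * (d:ℝ)⁻¹ - 2 * x + d := by
          field_simp
          ring
        nlinarith
      calc x ^ 2 * H - 2 * x ^ 2
          ≤ x ^ 2 * H - 2 * x * N := by nlinarith
        _ = ∑ d ∈ Finset.Icc 1 N, (x ^ 2 * (d:ℝ)⁻¹ - 2 * x) := by
            rw [Finset.sum_sub_distrib, ← Finset.mul_sum, ← hH,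
              Finset.sum_const, Nat.card_Icc, Nat.add_sub_cancel,
              nsmul_eq_mul]
            ring
        _ ≤ S := Finset.sum_le_sum step
    have hHub : H ≤ 1 + Real.log x := by
      rw [hH, ← harmonic_real]
      refine le_trans (harmonic_le_one_add_log N) ?_
      have : Real.log (N:ℝ) ≤ Real.log x :=
        Real.log_le_log (by exact_mod_cast hN1) hNx
      linarith
    have hHlb : Real.log x ≤ H := by
      rw [hH, ← harmonic_real]
      refine le_trans ?_ (log_add_one_le_harmonic N)
      push_cast
      exact Real.log_le_log hx0 (le_of_lt hxN1)
    have hloginv : Real.log x * (Real.log x)⁻¹ = 1 := mul_inv_cancel₀ (ne_of_gt hlogpos)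
    constructor
    · have e1 : (1 / (x ^ 2 * Real.log x)) * (x ^ 2 * H - 2 * x ^ 2)
          = (H - 2) / Real.log x := by
        field_simp
      have e2 : 1 - 2 * (Real.log x)⁻¹ ≤ (H - 2) / Real.log x := by
        rw [le_div_iff₀ hlogpos]
        have : (1 - 2 * (Real.log x)⁻¹) * Real.log x = Real.log x - 2 := by
          field_simp
        rw [this]
        linarith
      calc 1 - 2 * (Real.log x)⁻¹ ≤ (H - 2) / Real.log x := e2
        _ = (1 / (x ^ 2 * Real.log x)) * (x ^ 2 * H - 2 * x ^ 2) := e1.symm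
        _ ≤ (1 / (x ^ 2 * Real.log x)) * S :=
            mul_le_mul_of_nonneg_left hlb (by positivity)
    · have e3 : (1 / (x ^ 2 * Real.log x)) * (x ^ 2 * H)
          = H / Real.log x := by
        field_simp
      have e4 : H / Real.log x ≤ 1 + (Real.log x)⁻¹ := by
        rw [div_le_iff₀ hlogpos]
        have : (1 + (Real.log x)⁻¹) * Real.log x = Real.log x + 1 := by
          field_simp
        rw [this]
        linarith
      calc (1 / (x ^ 2 * Real.log x)) * S
          ≤ (1 / (x ^ 2 * Real.log x)) * (x ^ 2 * H) :=
            mul_le_mul_of_nonneg_left hub (by positivity)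
        _ = H / Real.log x := e3
        _ ≤ 1 + (Real.log x)⁻¹ := e4
  exact tendsto_of_tendsto_of_tendsto_of_le_of_le' hlo hhi
    (key.mono fun x h => h.1) (key.mono fun x h => h.2)
end
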